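/- arXiv:2202.00248 — 4 statements merged into one kernel-verified Lean document; each statement's English description precedes it below -/
import Mathlib

section
/- If {a_{11}, a_{12}, a_{21}, a_{22}, ..., a_{e1}, a_{e2}} is a symplectic subset of (Z_{p^a})^{2n}, where p is a prime and a ≥ 1, then e ≤ n. -/
open scoped BigOperators

/-- The symplectic inner product on `R^{2n}`: `⟨(x,y) | (x',y')⟩ₛ = y·x' − y'·x`. -/
def symp {R : Type*} [CommRing R] {n : ℕ}
    (u v : (Fin n → R) × (Fin n → R)) : R :=
  dotProduct u.2 v.1 - dotProduct v.2 u.1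

lemma symp_self {R : Type*} [CommRing R] {n : ℕ} (u : (Fin n → R) × (Fin n → R)) :
    symp u u = 0 := sub_self _

lemma symp_smul_right {R : Type*} [CommRing R] {n : ℕ} (c : R)
    (u v : (Fin n → R) × (Fin n → R)) : symp u (c • v) = c * symp u v := by
  simp only [symp, Prod.smul_fst, Prod.smul_snd, dotProduct_smul,
    smul_dotProduct, smul_eq_mul, mul_sub]

lemma symp_smul_left {R : Type*} [CommRing R] {n : ℕ} (c : R)
    (u v : (Fin n → R) × (Fin n → R)) : symp (c • u) v = c * symp u v := by
  simp only [symp, Prod.smul_fst, Prod.smul_snd, dotProduct_smul,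
    smul_dotProduct, smul_eq_mul, mul_sub]

lemma symp_antisymm {R : Type*} [CommRing R] {n : ℕ}
    (u v : (Fin n → R) × (Fin n → R)) : symp v u = -symp u v := by
  simp [symp]

/-- The symplectic product as a quadratic-form-style double sum against the
standard symplectic matrix `fromBlocks 0 (-1) 1 0`. -/
lemma gram_entry {R : Type*} [CommRing R] {n : ℕ}
    (u u' : (Fin n → R) × (Fin n → R)) :
    ∑ l : Fin n ⊕ Fin n, (∑ k : Fin n ⊕ Fin n, Sum.elim u.1 u.2 k *
        (Matrix.fromBlocks 0 (-1) 1 0 : Matrix (Fin n ⊕ Fin n) (Fin n ⊕ Fin n) R) k l) *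
      Sum.elim u'.1 u'.2 l = symp u u' := by
  have h1 : ∀ l0 : Fin n, (∑ k : Fin n ⊕ Fin n, Sum.elim u.1 u.2 k *
      (Matrix.fromBlocks 0 (-1) 1 0 : Matrix (Fin n ⊕ Fin n) (Fin n ⊕ Fin n) R) k (Sum.inl l0))
      = u.2 l0 := by
    intro l0
    rw [Fintype.sum_sum_type]
    simp [Matrix.one_apply, Finset.sum_ite_eq', mul_ite]
  have h2 : ∀ l0 : Fin n, (∑ k : Fin n ⊕ Fin n, Sum.elim u.1 u.2 k *
      (Matrix.fromBlocks 0 (-1) 1 0 : Matrix (Fin n ⊕ Fin n) (Fin n ⊕ Fin n) R) k (Sum.inr l0))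
      = -u.1 l0 := by
    intro l0
    rw [Fintype.sum_sum_type]
    simp [Matrix.one_apply, Finset.sum_ite_eq', mul_ite]
  rw [Fintype.sum_sum_type]
  simp only [h1, h2, Sum.elim_inl, Sum.elim_inr]
  simp only [symp, dotProduct]
  rw [sub_eq_add_neg]
  congr 1
  rw [← Finset.sum_neg_distrib]
  exact Finset.sum_congr rfl fun l _ => by ring

/-- For a nonzero `c` in `ZMod (p^a)` there is `d` with `c * d = p^(a-1)`. -/
lemma exists_mul_eq_pow {p a : ℕ} (hp : p.Prime) (ha : 1 ≤ a)
    (c : ZMod (p ^ a)) (hc : c ≠ 0) :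
    ∃ d : ZMod (p ^ a), c * d = (p : ZMod (p ^ a)) ^ (a - 1) := by
  haveI : NeZero (p ^ a) := ⟨pow_ne_zero _ hp.pos.ne'⟩
  set m := c.val with hm
  have hm0 : m ≠ 0 := fun h => hc ((ZMod.val_eq_zero c).mp h)
  set s := m.factorization p with hs
  set t := m / p ^ s with ht
  have hmt : p ^ s * t = m := Nat.ordProj_mul_ordCompl_eq_self m p
  have hcop : p.Coprime t := Nat.coprime_ordCompl hp hm0
  have hslt : s < a := by
    have h1 : p ^ s ≤ m := Nat.le_of_dvd (Nat.pos_of_ne_zero hm0) (Nat.ordProj_dvd m p)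
    have h2 : m < p ^ a := ZMod.val_lt c
    exact (Nat.pow_lt_pow_iff_right hp.one_lt).mp (lt_of_le_of_lt h1 h2)
  have hunit : IsUnit (t : ZMod (p ^ a)) := by
    rw [ZMod.isUnit_iff_coprime]
    exact Nat.Coprime.pow_right a hcop.symm
  obtain ⟨y, hy⟩ := hunit.exists_right_inv
  refine ⟨(p : ZMod (p ^ a)) ^ (a - 1 - s) * y, ?_⟩
  have hc' : c = (p : ZMod (p ^ a)) ^ s * (t : ZMod (p ^ a)) := by
    have : ((m : ℕ) : ZMod (p ^ a)) = c := by
      rw [hm, ZMod.natCast_val, ZMod.cast_id]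
    rw [← this, ← hmt]
    push_cast
    ring
  rw [hc']
  calc (p : ZMod (p ^ a)) ^ s * (t : ZMod (p ^ a)) *
        ((p : ZMod (p ^ a)) ^ (a - 1 - s) * y)
      = (p : ZMod (p ^ a)) ^ (s + (a - 1 - s)) * ((t : ZMod (p ^ a)) * y) := by
        rw [pow_add]; ring
    _ = (p : ZMod (p ^ a)) ^ (a - 1) := by
        rw [hy, mul_one]
        congr 1
        omega

theorem stmt_3 (p a n e : ℕ) (hp : p.Prime) (ha : 1 ≤ a)
    (a1 a2 : Fin e → (Fin n → ZMod (p ^ a)) × (Fin n → ZMod (p ^ a)))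
    (h11 : ∀ i j, i ≠ j → symp (a1 i) (a1 j) = 0)
    (h22 : ∀ i j, i ≠ j → symp (a2 i) (a2 j) = 0)
    (h12 : ∀ i k, i ≠ k → symp (a1 i) (a2 k) = 0)
    (hne : ∀ i, symp (a1 i) (a2 i) ≠ 0) :
    e ≤ n := by
  classical
  haveI : NeZero (p ^ a) := ⟨pow_ne_zero _ hp.pos.ne'⟩
  -- choose the scaling factors
  choose d hd using fun i => exists_mul_eq_pow hp ha _ (hne i)
  -- the 2e row vectors
  set v : Fin e ⊕ Fin e → (Fin n → ZMod (p ^ a)) × (Fin n → ZMod (p ^ a)) :=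
    Sum.elim a1 (fun i => d i • a2 i) with hv
  -- the symplectic Gram matrix over ZMod (p^a)
  have hsymp : ∀ r s, symp (v r) (v s) =
      (p : ZMod (p ^ a)) ^ (a - 1) *
        (Matrix.fromBlocks 0 1 (-1) 0 :
          Matrix (Fin e ⊕ Fin e) (Fin e ⊕ Fin e) (ZMod (p ^ a))) r s := by
    rintro (i | i) (j | j)
    · simp only [hv, Sum.elim_inl, Matrix.fromBlocks_apply₁₁, Matrix.zero_apply, mul_zero]
      rcases eq_or_ne i j with rfl | hij
      · exact symp_self _
      · exact h11 i j hij
    · simp only [hv, Sum.elim_inl, Sum.elim_inr, Matrix.fromBlocks_apply₁₂,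
        Matrix.one_apply, symp_smul_right]
      rcases eq_or_ne i j with rfl | hij
      · rw [mul_comm (d i)]
        simp [hd i]
      · simp [hij, h12 i j hij]
    · simp only [hv, Sum.elim_inl, Sum.elim_inr, Matrix.fromBlocks_apply₂₁,
        Matrix.neg_apply, Matrix.one_apply, symp_smul_left]
      rcases eq_or_ne i j with rfl | hij
      · rw [symp_antisymm, mul_neg, mul_comm (d i)]
        simp [hd i]
      · have := h12 j i (Ne.symm hij)
        rw [symp_antisymm, this]
        simp [hij]
    · simp only [hv, Sum.elim_inr, Matrix.fromBlocks_apply₂₂, Matrix.zero_apply, mul_zero,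
        symp_smul_left, symp_smul_right]
      rcases eq_or_ne i j with rfl | hij
      · rw [symp_self]; ring
      · rw [h22 i j hij]; ring
  -- the flattened rows of length 2n
  set w : Fin e ⊕ Fin e → (Fin n ⊕ Fin n → ZMod (p ^ a)) :=
    fun r => Sum.elim (v r).1 (v r).2 with hw
  -- integer lifts
  set Xint : Matrix (Fin e ⊕ Fin e) (Fin n ⊕ Fin n) ℤ :=
    Matrix.of (fun r k => ((w r k).val : ℤ)) with hX
  set Jn : Matrix (Fin n ⊕ Fin n) (Fin n ⊕ Fin n) ℤ :=
    Matrix.fromBlocks 0 (-1) 1 0 with hJn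
  set Je : Matrix (Fin e ⊕ Fin e) (Fin e ⊕ Fin e) ℤ :=
    Matrix.fromBlocks 0 1 (-1) 0 with hJe
  set Y : Matrix (Fin e ⊕ Fin e) (Fin e ⊕ Fin e) ℤ := Xint * Jn * Xint.transpose with hY
  have castX : ∀ r k, ((Xint r k : ℤ) : ZMod (p ^ a)) = w r k := by
    intro r k
    simp [hX, ZMod.natCast_val, ZMod.cast_id]
  have castJ : ∀ k l, ((Jn k l : ℤ) : ZMod (p ^ a)) =
      (Matrix.fromBlocks 0 (-1) 1 0 :
        Matrix (Fin n ⊕ Fin n) (Fin n ⊕ Fin n) (ZMod (p ^ a))) k l := by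
    rintro (k | k) (l | l) <;>
      simp only [hJn, Matrix.fromBlocks_apply₁₁, Matrix.fromBlocks_apply₁₂,
        Matrix.fromBlocks_apply₂₁, Matrix.fromBlocks_apply₂₂, Matrix.zero_apply,
        Matrix.neg_apply, Matrix.one_apply, Int.cast_zero, Int.cast_neg] <;>
      split <;> simp
  have castJe : ∀ r s, ((Je r s : ℤ) : ZMod (p ^ a)) =
      (Matrix.fromBlocks 0 1 (-1) 0 :
        Matrix (Fin e ⊕ Fin e) (Fin e ⊕ Fin e) (ZMod (p ^ a))) r s := by
    rintro (r | r) (s | s) <;>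
      simp only [hJe, Matrix.fromBlocks_apply₁₁, Matrix.fromBlocks_apply₁₂,
        Matrix.fromBlocks_apply₂₁, Matrix.fromBlocks_apply₂₂, Matrix.zero_apply,
        Matrix.neg_apply, Matrix.one_apply, Int.cast_zero, Int.cast_neg] <;>
      split <;> simp
  -- The key congruence: Y ≡ p^(a-1) • Je  (mod p^a), entrywise.
  have key : ∀ r s, ((Y r s : ℤ) : ZMod (p ^ a)) = (p : ZMod (p ^ a)) ^ (a - 1) *
      (Matrix.fromBlocks 0 1 (-1) 0 :
        Matrix (Fin e ⊕ Fin e) (Fin e ⊕ Fin e) (ZMod (p ^ a))) r s := by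
    intro r s
    rw [← hsymp r s]
    have hYrs : Y r s = ∑ l, (∑ k, Xint r k * Jn k l) * Xint s l := by
      simp [hY, Matrix.mul_apply, Matrix.transpose_apply]
    rw [hYrs]
    push_cast
    simp only [castX, castJ]
    simp only [hw]
    exact gram_entry (v r) (v s)
  -- extract the exact integer-matrix factorization Y = p^(a-1) • W
  have hdvd : ∀ r s, ∃ k : ℤ, Y r s = (p : ℤ) ^ (a - 1) * (Je r s + p * k) := by
    intro r s
    have h0 : ((Y r s - (p : ℤ) ^ (a - 1) * Je r s : ℤ) : ZMod (p ^ a)) = 0 := by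
      push_cast
      rw [key r s, castJe r s]
      ring
    rw [ZMod.intCast_zmod_eq_zero_iff_dvd] at h0
    obtain ⟨k, hk⟩ := h0
    refine ⟨k, ?_⟩
    have hpa : (p : ℤ) ^ a = (p : ℤ) ^ (a - 1) * p := by
      rw [← pow_succ]
      congr 1
      omega
    push_cast at hk
    rw [sub_eq_iff_eq_add] at hk
    rw [hk, hpa]
    ring
  choose kk hkk using fun r => fun s => hdvd r s
  set W : Matrix (Fin e ⊕ Fin e) (Fin e ⊕ Fin e) ℤ :=
    Matrix.of (fun r s => Je r s + p * kk r s) with hW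
  have hYW : Y = ((p : ℤ) ^ (a - 1)) • W := by
    ext r s
    simp [hW, Matrix.smul_apply, hkk r s, smul_eq_mul]
  -- det W is nonzero because det W ≡ det Je ≡ ±1 mod p
  haveI : Fact p.Prime := ⟨hp⟩
  have hdetW : W.det ≠ 0 := by
    intro h0
    have hmap : W.map (Int.castRingHom (ZMod p)) =
        (Matrix.fromBlocks 0 1 (-1) 0 :
          Matrix (Fin e ⊕ Fin e) (Fin e ⊕ Fin e) (ZMod p)) := by
      have castJep : ∀ r s, ((Je r s : ℤ) : ZMod p) =
          (Matrix.fromBlocks 0 1 (-1) 0 :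
            Matrix (Fin e ⊕ Fin e) (Fin e ⊕ Fin e) (ZMod p)) r s := by
        rintro (r | r) (s | s) <;>
          simp only [hJe, Matrix.fromBlocks_apply₁₁, Matrix.fromBlocks_apply₁₂,
            Matrix.fromBlocks_apply₂₁, Matrix.fromBlocks_apply₂₂, Matrix.zero_apply,
            Matrix.neg_apply, Matrix.one_apply, Int.cast_zero, Int.cast_neg] <;>
          split <;> simp
      ext r s
      rw [Matrix.map_apply]
      have hWrs : W r s = Je r s + p * kk r s := rfl
      rw [hWrs, ← castJep r s]
      push_cast
      simp [ZMod.natCast_self]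
    have hneg : (-1 : Matrix (Fin e ⊕ Fin e) (Fin e ⊕ Fin e) (ZMod p)) =
        Matrix.fromBlocks (-1) 0 0 (-1) := by
      rw [← Matrix.fromBlocks_one, Matrix.fromBlocks_neg, neg_zero]
    have hJJ : (Matrix.fromBlocks 0 1 (-1) 0 :
        Matrix (Fin e ⊕ Fin e) (Fin e ⊕ Fin e) (ZMod p)) *
        Matrix.fromBlocks 0 1 (-1) 0 = -1 := by
      rw [Matrix.fromBlocks_multiply, hneg]
      congr 1 <;> simp
    have hdet1 : ((Matrix.fromBlocks 0 1 (-1) 0 :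
        Matrix (Fin e ⊕ Fin e) (Fin e ⊕ Fin e) (ZMod p))).det *
        ((Matrix.fromBlocks 0 1 (-1) 0 :
        Matrix (Fin e ⊕ Fin e) (Fin e ⊕ Fin e) (ZMod p))).det = 1 := by
      rw [← Matrix.det_mul, hJJ, Matrix.det_neg, Matrix.det_one, mul_one]
      exact Even.neg_one_pow (by simp [Fintype.card_sum, parity_simps])
    have hdet0 : ((Matrix.fromBlocks 0 1 (-1) 0 :
        Matrix (Fin e ⊕ Fin e) (Fin e ⊕ Fin e) (ZMod p))).det = 0 := by
      rw [← hmap, ← RingHom.mapMatrix_apply, ← RingHom.map_det, h0]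
      simp
    rw [hdet0, zero_mul] at hdet1
    exact zero_ne_one hdet1
  have hdetY : Y.det ≠ 0 := by
    rw [hYW, Matrix.det_smul]
    refine mul_ne_zero (pow_ne_zero _ (pow_ne_zero _ ?_)) hdetW
    exact_mod_cast hp.pos.ne'
  -- pass to ℚ and use rank
  set c : ℤ →+* ℚ := Int.castRingHom ℚ with hc
  have hdetYQ : (Y.map c).det ≠ 0 := by
    rw [← RingHom.mapMatrix_apply, ← RingHom.map_det]
    intro h
    apply hdetY
    have h' : ((Y.det : ℤ) : ℚ) = 0 := by simpa [hc] using h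
    exact_mod_cast h'
  have hrank1 : (Y.map c).rank = Fintype.card (Fin e ⊕ Fin e) :=
    Matrix.rank_of_isUnit _ ((Matrix.isUnit_iff_isUnit_det _).mpr (isUnit_iff_ne_zero.mpr hdetYQ))
  have hfactor : Y.map c = (Xint.map c) * ((Jn * Xint.transpose).map c) := by
    rw [hY, Matrix.mul_assoc, ← Matrix.map_mul]
  have hrank2 : (Y.map c).rank ≤ Fintype.card (Fin n ⊕ Fin n) := by
    rw [hfactor]
    exact le_trans (Matrix.rank_mul_le_left _ _) (Matrix.rank_le_card_width _)
  rw [hrank1] at hrank2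
  simp only [Fintype.card_sum, Fintype.card_fin] at hrank2
  omega
end

section
/- Let C ⊆ R^{2n} be an additive code over a finite commutative local Frobenius ring R with generating character χ, with a generating set G containing e hyperbolic pairs u_{i1}, u_{i2} (i = 1,...,e) and otherwise isotropic generators. If there exists a symplectic subset {a_{11}, a_{12}, ..., a_{e1}, a_{e2}} ⊆ R^{2c} with χ(⟨u_{i1} | u_{i2}⟩_s) = χ(⟨a_{i1} | a_{i2}⟩_s) for each i, then C has a χ-self-orthogonal extension C' ⊆ R^{2(n+c)}. -/
open scoped BigOperators

/-- Puncturing a vector of `R^{2(n+c)}` at the coordinates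
`n+1,…,n+c, 2n+1,…,2n+2c` (the last `c` coordinates of each half). -/
def punct {R : Type*} (n c : ℕ)
    (u : (Fin (n + c) → R) × (Fin (n + c) → R)) :
    (Fin n → R) × (Fin n → R) :=
  (fun i => u.1 (Fin.castAdd c i), fun i => u.2 (Fin.castAdd c i))

/-- The `χ`-symplectic dual (as a set) of a set `C ⊆ R^{2n}`. -/
def chiDualSet {R : Type*} [CommRing R] {n : ℕ} (χ : R → ℂ)
    (C : Set ((Fin n → R) × (Fin n → R))) : Set ((Fin n → R) × (Fin n → R)) :=
  {v | ∀ c ∈ C, χ (symp c v) = 1}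

/-- The `t`-th `χ`-symplectic dual (as a set): symplectic products whose character
value is a `pt`-th root of unity (`pt = p^t`). -/
def chiDualSetT {R : Type*} [CommRing R] {n : ℕ} (χ : R → ℂ)
    (C : Set ((Fin n → R) × (Fin n → R))) (pt : ℕ) :
    Set ((Fin n → R) × (Fin n → R)) :=
  {v | ∀ c ∈ C, (χ (symp c v)) ^ pt = 1}

/-- The rank (minimal number of generators) of the quotient of the additive group
generated by `C` modulo `D`: the least `k` such that `k` elements of `C` generate
`C` modulo `D`. -/
noncomputable def relRank {V : Type*} [AddCommGroup V] (C D : Set V) : ℕ :=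
  sInf {k : ℕ | ∃ f : Fin k → V, (∀ i, f i ∈ C) ∧
    ∀ x ∈ C, ∃ g : Fin k → ℤ, x - ∑ i, g i • f i ∈ D}

section AuxLemmas

variable {R : Type} [CommRing R]

private lemma symp_self' {N : ℕ} (x : (Fin N → R) × (Fin N → R)) : symp x x = 0 := sub_self _

private lemma symp_anti {N : ℕ} (x y : (Fin N → R) × (Fin N → R)) : symp x y = - symp y x := by
  unfold symp; ring

private lemma symp_zero_left {N : ℕ} (y : (Fin N → R) × (Fin N → R)) : symp 0 y = 0 := by
  simp [symp]

private lemma symp_zero_right {N : ℕ} (x : (Fin N → R) × (Fin N → R)) : symp x 0 = 0 := by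
  simp [symp]

private lemma symp_add_right {N : ℕ} (x y y' : (Fin N → R) × (Fin N → R)) :
    symp x (y + y') = symp x y + symp x y' := by
  simp only [symp, Prod.fst_add, Prod.snd_add, dotProduct_add, add_dotProduct]
  ring

private lemma symp_add_left {N : ℕ} (x x' y : (Fin N → R) × (Fin N → R)) :
    symp (x + x') y = symp x y + symp x' y := by
  simp only [symp, Prod.fst_add, Prod.snd_add, dotProduct_add, add_dotProduct]
  ring

private lemma symp_neg_right {N : ℕ} (x y : (Fin N → R) × (Fin N → R)) :
    symp x (-y) = - symp x y := by
  simp only [symp, Prod.fst_neg, Prod.snd_neg, dotProduct_neg, neg_dotProduct]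
  ring

private lemma symp_neg_left {N : ℕ} (x y : (Fin N → R) × (Fin N → R)) :
    symp (-x) y = - symp x y := by
  simp only [symp, Prod.fst_neg, Prod.snd_neg, dotProduct_neg, neg_dotProduct]
  ring

private lemma symp_neg_left_swap {N : ℕ} (x y : (Fin N → R) × (Fin N → R)) :
    symp (-x) y = symp y x := by
  rw [symp_neg_left, symp_anti, neg_neg]

private lemma chi_ne_zero (χ : AddChar R ℂ) (x : R) : χ x ≠ 0 := by
  intro h0
  have e : x + -x = 0 := by ring
  have h1 : χ (x + -x) = χ x * χ (-x) := AddChar.map_add_eq_mul χ x (-x)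
  rw [e, AddChar.map_zero_eq_one, h0, zero_mul] at h1
  exact one_ne_zero h1

private lemma chi_sub_eq_one (χ : AddChar R ℂ) {x y : R} (h : χ x = χ y) : χ (x - y) = 1 := by
  have e1 : x - y + y = x := by ring
  have h1 : χ (x - y) * χ y = 1 * χ y := by
    rw [one_mul, ← AddChar.map_add_eq_mul, e1, h]
  exact mul_right_cancel₀ (chi_ne_zero χ y) h1

private lemma chi_neg_eq_one (χ : AddChar R ℂ) {x : R} (h : χ x = 1) : χ (-x) = 1 := by
  have e1 : (-x) = 0 - x := by ring
  rw [e1]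
  exact chi_sub_eq_one χ (by rw [h, AddChar.map_zero_eq_one])

private def dualR {N : ℕ} (χ : AddChar R ℂ) (x : (Fin N → R) × (Fin N → R)) :
    AddSubgroup ((Fin N → R) × (Fin N → R)) where
  carrier := {y | χ (symp x y) = 1}
  zero_mem' := by simp [Set.mem_setOf_eq, symp_zero_right, AddChar.map_zero_eq_one]
  add_mem' := by
    intro a b ha hb
    simp only [Set.mem_setOf_eq] at *
    rw [symp_add_right, AddChar.map_add_eq_mul, ha, hb, one_mul]
  neg_mem' := by
    intro a ha
    simp only [Set.mem_setOf_eq] at *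
    rw [symp_neg_right]
    exact chi_neg_eq_one χ ha

private def dualL {N : ℕ} (χ : AddChar R ℂ) (y : (Fin N → R) × (Fin N → R)) :
    AddSubgroup ((Fin N → R) × (Fin N → R)) where
  carrier := {x | χ (symp x y) = 1}
  zero_mem' := by simp [Set.mem_setOf_eq, symp_zero_left, AddChar.map_zero_eq_one]
  add_mem' := by
    intro a b ha hb
    simp only [Set.mem_setOf_eq] at *
    rw [symp_add_left, AddChar.map_add_eq_mul, ha, hb, one_mul]
  neg_mem' := by
    intro a ha
    simp only [Set.mem_setOf_eq] at *
    rw [symp_neg_left]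
    exact chi_neg_eq_one χ ha

private lemma closure_orth {N : ℕ} (χ : AddChar R ℂ)
    (S : Set ((Fin N → R) × (Fin N → R)))
    (hS : ∀ g ∈ S, ∀ h ∈ S, χ (symp g h) = 1) :
    ∀ x ∈ AddSubgroup.closure S, ∀ y ∈ AddSubgroup.closure S, χ (symp x y) = 1 := by
  have step1 : ∀ g ∈ S, ∀ w ∈ AddSubgroup.closure S, χ (symp g w) = 1 := by
    intro g hg w hw
    have hle : AddSubgroup.closure S ≤ dualR χ g :=
      (AddSubgroup.closure_le _).mpr (fun h hh => hS g hg h hh)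
    exact hle hw
  intro x hx y hy
  have hle : AddSubgroup.closure S ≤ dualL χ y :=
    (AddSubgroup.closure_le _).mpr (fun g hg => step1 g hg y hy)
  exact hle hx

private lemma dot_append {n c : ℕ} (x a : Fin n → R) (y b : Fin c → R) :
    dotProduct (Fin.append x y) (Fin.append a b)
      = dotProduct x a + dotProduct y b := by
  unfold dotProduct
  rw [Fin.sum_univ_add]
  simp [Fin.append_left, Fin.append_right]

def ext2 {n c : ℕ} (g : (Fin n → R) × (Fin n → R)) (w : (Fin c → R) × (Fin c → R)) :
    (Fin (n + c) → R) × (Fin (n + c) → R) :=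
  (Fin.append g.1 w.1, Fin.append g.2 w.2)

private lemma symp_ext2 {n c : ℕ} (g h : (Fin n → R) × (Fin n → R))
    (w w' : (Fin c → R) × (Fin c → R)) :
    symp (ext2 g w) (ext2 h w') = symp g h + symp w w' := by
  unfold symp ext2
  simp only [dot_append]
  ring

private lemma punct_ext2 {n c : ℕ} (g : (Fin n → R) × (Fin n → R))
    (w : (Fin c → R) × (Fin c → R)) : punct n c (ext2 g w) = g := by
  refine Prod.ext ?_ ?_ <;> funext i <;> simp [punct, ext2, Fin.append_left]

def punctHom (R : Type) [CommRing R] (n c : ℕ) :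
    ((Fin (n + c) → R) × (Fin (n + c) → R)) →+ ((Fin n → R) × (Fin n → R)) where
  toFun := punct n c
  map_zero' := rfl
  map_add' _ _ := rfl

def totv {k : ℕ} {α : Type*} [Zero α] (f : Fin k → α) (m : ℕ) : α :=
  if hm : m < k then f ⟨m, hm⟩ else 0

def hyQ {n e : ℕ} (u1 u2 : Fin e → (Fin n → R) × (Fin n → R))
    (g : (Fin n → R) × (Fin n → R)) (m : ℕ) : Prop :=
  m < e ∧ (totv u1 m = g ∨ totv u2 m = g)

open Classical in
noncomputable def vmap {n e c : ℕ} (u1 u2 : Fin e → (Fin n → R) × (Fin n → R))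
    (a1 a2 : Fin e → (Fin c → R) × (Fin c → R)) (g : (Fin n → R) × (Fin n → R)) :
    (Fin c → R) × (Fin c → R) :=
  if h : ∃ m, hyQ u1 u2 g m then
    (if totv u1 (Nat.find h) = g then totv a1 (Nat.find h) else - totv a2 (Nat.find h))
  else 0

end AuxLemmas

theorem stmt_7 (p b : ℕ) (hp : p.Prime) (hb : 0 < b)
    (R : Type) [CommRing R] [Fintype R] [IsLocalRing R] [CharP R (p ^ b)]
    (χ : AddChar R ℂ)
    (hχ : ∀ ψ : AddChar R ℂ, ∃ r : R, ∀ t : R, ψ t = χ (r * t))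
    (n e c d : ℕ)
    (u1 u2 : Fin e → (Fin n → R) × (Fin n → R))
    (z : Fin d → (Fin n → R) × (Fin n → R))
    (C : AddSubgroup ((Fin n → R) × (Fin n → R)))
    (hgen : AddSubgroup.closure (Set.range u1 ∪ Set.range u2 ∪ Set.range z) = C)
    (hiso : ∀ j, ∀ h ∈ Set.range u1 ∪ Set.range u2 ∪ Set.range z,
      χ (symp (z j) h) = 1)
    (hhyp1 : ∀ i, χ (symp (u1 i) (u2 i)) ≠ 1)
    (hhyp2 : ∀ i, ∀ h ∈ Set.range u1 ∪ Set.range u2 ∪ Set.range z,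
      h ≠ u2 i → χ (symp (u1 i) h) = 1)
    (hhyp3 : ∀ i, ∀ h ∈ Set.range u1 ∪ Set.range u2 ∪ Set.range z,
      h ≠ u1 i → χ (symp (u2 i) h) = 1)
    (a1 a2 : Fin e → (Fin c → R) × (Fin c → R))
    (hs11 : ∀ i j, i ≠ j → χ (symp (a1 i) (a1 j)) = 1)
    (hs22 : ∀ i j, i ≠ j → χ (symp (a2 i) (a2 j)) = 1)
    (hs12 : ∀ i k, i ≠ k → χ (symp (a1 i) (a2 k)) = 1)
    (hsne : ∀ i, χ (symp (a1 i) (a2 i)) ≠ 1)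
    (hmatch : ∀ i, χ (symp (u1 i) (u2 i)) = χ (symp (a1 i) (a2 i))) :
    ∃ C' : AddSubgroup ((Fin (n + c) → R) × (Fin (n + c) → R)),
      (∀ x ∈ C', ∀ y ∈ C', χ (symp x y) = 1) ∧
      punct n c '' (C' : Set ((Fin (n + c) → R) × (Fin (n + c) → R))) = (C : Set ((Fin n → R) × (Fin n → R))) := by

  classical
  have hg1 : ∀ i, u1 i ∈ Set.range u1 ∪ Set.range u2 ∪ Set.range z := fun i =>
    Set.mem_union_left _ (Set.mem_union_left _ (Set.mem_range_self i))
  have hg2 : ∀ i, u2 i ∈ Set.range u1 ∪ Set.range u2 ∪ Set.range z := fun i =>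
    Set.mem_union_left _ (Set.mem_union_right _ (Set.mem_range_self i))
  -- basic consequences of the hypotheses
  have hz1 : ∀ k i, z k ≠ u1 i := by
    intro k i h
    apply hhyp1 i
    have h2 := hiso k (u2 i) (hg2 i)
    rwa [h] at h2
  have hz2 : ∀ k i, z k ≠ u2 i := by
    intro k i h
    apply hhyp1 i
    have h2 := hiso k (u1 i) (hg1 i)
    rw [h] at h2
    rw [symp_anti]
    exact chi_neg_eq_one χ h2
  have L2 : ∀ i j, u1 i = u1 j → u2 i = u2 j := by
    intro i j hij
    by_contra hne
    have h := hhyp2 j (u2 i) (hg2 i) hne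
    rw [← hij] at h
    exact hhyp1 i h
  have L3 : ∀ i j, u2 i = u2 j → u1 i = u1 j := by
    intro i j hij
    by_contra hne
    have h := hhyp3 j (u1 i) (hg1 i) hne
    rw [← hij] at h
    apply hhyp1 i
    rw [symp_anti]
    exact chi_neg_eq_one χ h
  have L4 : ∀ i j, u1 i = u2 j → u2 i = u1 j := by
    intro i j hij
    by_contra hne
    have h := hhyp3 j (u2 i) (hg2 i) hne
    rw [← hij] at h
    exact hhyp1 i h
  -- totv facts
  have htotu1' : ∀ (m : ℕ) (hm : m < e), totv u1 m = u1 ⟨m, hm⟩ := fun m hm => dif_pos hm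
  have htotu2' : ∀ (m : ℕ) (hm : m < e), totv u2 m = u2 ⟨m, hm⟩ := fun m hm => dif_pos hm
  have htota1' : ∀ (m : ℕ) (hm : m < e), totv a1 m = a1 ⟨m, hm⟩ := fun m hm => dif_pos hm
  have htota2' : ∀ (m : ℕ) (hm : m < e), totv a2 m = a2 ⟨m, hm⟩ := fun m hm => dif_pos hm
  have htotu1 : ∀ i : Fin e, totv u1 (i : ℕ) = u1 i := fun i => by simp [totv]
  have htotu2 : ∀ i : Fin e, totv u2 (i : ℕ) = u2 i := fun i => by simp [totv]
  -- minimality of the chosen index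
  have hfind : ∀ (g : (Fin n → R) × (Fin n → R)) (hq : ∃ m, hyQ u1 u2 g m) (i : Fin e),
      (u1 i = g ∨ u2 i = g) → Nat.find hq ≤ (i : ℕ) := by
    intro g hq i hi
    apply Nat.find_min'
    refine ⟨i.isLt, ?_⟩
    rcases hi with h | h
    · exact Or.inl ((htotu1 i).trans h)
    · exact Or.inr ((htotu2 i).trans h)
  -- characterization of vmap on hyperbolic generators
  have hvmap : ∀ (g : (Fin n → R) × (Fin n → R)) (hq : ∃ m, hyQ u1 u2 g m),
      (u1 ⟨Nat.find hq, (Nat.find_spec hq).1⟩ = g ∧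
        vmap u1 u2 a1 a2 g = a1 ⟨Nat.find hq, (Nat.find_spec hq).1⟩) ∨
      (u2 ⟨Nat.find hq, (Nat.find_spec hq).1⟩ = g ∧
        vmap u1 u2 a1 a2 g = - a2 ⟨Nat.find hq, (Nat.find_spec hq).1⟩) := by
    intro g hq
    have hm := (Nat.find_spec hq).1
    by_cases h1 : totv u1 (Nat.find hq) = g
    · left
      constructor
      · rw [← htotu1' _ hm]; exact h1
      · unfold vmap
        rw [dif_pos hq, if_pos h1, htota1' _ hm]
    · right
      have h2 : totv u2 (Nat.find hq) = g := by
        rcases (Nat.find_spec hq).2 with h | h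
        · exact absurd h h1
        · exact h
      constructor
      · rw [← htotu2' _ hm]; exact h2
      · unfold vmap
        rw [dif_pos hq, if_neg h1, htota2' _ hm]
  -- vmap vanishes on the isotropic generators
  have hnotz : ∀ k : Fin d, ¬ ∃ m, hyQ u1 u2 (z k) m := by
    rintro k ⟨m, hm, hd⟩
    rcases hd with h | h
    · rw [htotu1' m hm] at h
      exact hz1 k ⟨m, hm⟩ h.symm
    · rw [htotu2' m hm] at h
      exact hz2 k ⟨m, hm⟩ h.symm
  have hvz : ∀ k, vmap u1 u2 a1 a2 (z k) = 0 := by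
    intro k
    unfold vmap
    rw [dif_neg (hnotz k)]
  -- key orthogonality of extended generators
  have key : ∀ g ∈ Set.range u1 ∪ Set.range u2 ∪ Set.range z,
      ∀ h ∈ Set.range u1 ∪ Set.range u2 ∪ Set.range z,
      χ (symp (ext2 g (vmap u1 u2 a1 a2 g)) (ext2 h (vmap u1 u2 a1 a2 h))) = 1 := by
    intro g hg h hh
    rw [symp_ext2]
    by_cases hgh : g = h
    · subst hgh
      rw [symp_self', symp_self', add_zero, AddChar.map_zero_eq_one]
    rcases hh with hh' | ⟨k, rfl⟩
    · rcases hg with hg' | ⟨k, rfl⟩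
      · -- both generators are hyperbolic
        have hhG : h ∈ Set.range u1 ∪ Set.range u2 ∪ Set.range z := Set.mem_union_left _ hh'
        have hgQ : ∃ m, hyQ u1 u2 g m := by
          rcases hg' with ⟨i, rfl⟩ | ⟨i, rfl⟩
          · exact ⟨(i : ℕ), i.isLt, Or.inl (htotu1 i)⟩
          · exact ⟨(i : ℕ), i.isLt, Or.inr (htotu2 i)⟩
        have hhQ : ∃ m, hyQ u1 u2 h m := by
          rcases hh' with ⟨i, rfl⟩ | ⟨i, rfl⟩
          · exact ⟨(i : ℕ), i.isLt, Or.inl (htotu1 i)⟩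
          · exact ⟨(i : ℕ), i.isLt, Or.inr (htotu2 i)⟩
        have hgc := hvmap g hgQ
        have hhc := hvmap h hhQ
        set Mg : Fin e := ⟨Nat.find hgQ, (Nat.find_spec hgQ).1⟩ with hMg
        set Mh : Fin e := ⟨Nat.find hhQ, (Nat.find_spec hhQ).1⟩ with hMh
        by_cases hmm : Nat.find hgQ = Nat.find hhQ
        · have hMM : Mg = Mh := Fin.ext hmm
          rcases hgc with ⟨hgu, hgv⟩ | ⟨hgu, hgv⟩ <;> rcases hhc with ⟨hhu, hhv⟩ | ⟨hhu, hhv⟩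
          · exact absurd (by rw [← hgu, ← hhu, hMM]) hgh
          · rw [hgv, hhv, ← hgu, ← hhu, ← hMM, symp_neg_right, ← sub_eq_add_neg]
            exact chi_sub_eq_one χ (hmatch Mg)
          · rw [hgv, hhv, ← hgu, ← hhu, ← hMM]
            have hrw : symp (u2 Mg) (u1 Mg) + symp (-a2 Mg) (a1 Mg)
                = -(symp (u1 Mg) (u2 Mg) - symp (a1 Mg) (a2 Mg)) := by
              rw [symp_neg_left_swap, symp_anti (u2 Mg) (u1 Mg)]
              ring
            rw [hrw]
            exact chi_neg_eq_one χ (chi_sub_eq_one χ (hmatch Mg))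
          · exact absurd (by rw [← hgu, ← hhu, hMM]) hgh
        · have hMne : Mg ≠ Mh := fun hcon => hmm (congrArg Fin.val hcon)
          have hA : χ (symp g h) = 1 := by
            rcases hgc with ⟨hgu, _⟩ | ⟨hgu, _⟩ <;> rcases hhc with ⟨hhu, _⟩ | ⟨hhu, _⟩
            · rw [← hgu]
              apply hhyp2 Mg h hhG
              intro hcon
              have h1 : u2 Mh = u1 Mg := L4 Mh Mg (hhu.trans hcon)
              have le1 : Nat.find hgQ ≤ (Mh : ℕ) := hfind g hgQ Mh (Or.inr (h1.trans hgu))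
              have le2 : Nat.find hhQ ≤ (Mg : ℕ) := hfind h hhQ Mg (Or.inr hcon.symm)
              exact hmm (le_antisymm le1 le2)
            · rw [← hgu]
              apply hhyp2 Mg h hhG
              intro hcon
              have h1 : u1 Mh = u1 Mg := L3 Mh Mg (hhu.trans hcon)
              have le1 : Nat.find hgQ ≤ (Mh : ℕ) := hfind g hgQ Mh (Or.inl (h1.trans hgu))
              have le2 : Nat.find hhQ ≤ (Mg : ℕ) := hfind h hhQ Mg (Or.inr hcon.symm)
              exact hmm (le_antisymm le1 le2)
            · rw [← hgu]
              apply hhyp3 Mg h hhG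
              intro hcon
              have h1 : u2 Mh = u2 Mg := L2 Mh Mg (hhu.trans hcon)
              have le1 : Nat.find hgQ ≤ (Mh : ℕ) := hfind g hgQ Mh (Or.inr (h1.trans hgu))
              have le2 : Nat.find hhQ ≤ (Mg : ℕ) := hfind h hhQ Mg (Or.inl hcon.symm)
              exact hmm (le_antisymm le1 le2)
            · rw [← hgu]
              apply hhyp3 Mg h hhG
              intro hcon
              have h1 : u2 Mg = u1 Mh := L4 Mg Mh (hcon.symm.trans hhu.symm)
              have le1 : Nat.find hgQ ≤ (Mh : ℕ) := hfind g hgQ Mh (Or.inl (h1.symm.trans hgu))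
              have le2 : Nat.find hhQ ≤ (Mg : ℕ) := hfind h hhQ Mg (Or.inl hcon.symm)
              exact hmm (le_antisymm le1 le2)
          have hB : χ (symp (vmap u1 u2 a1 a2 g) (vmap u1 u2 a1 a2 h)) = 1 := by
            rcases hgc with ⟨_, hgv⟩ | ⟨_, hgv⟩ <;> rcases hhc with ⟨_, hhv⟩ | ⟨_, hhv⟩ <;>
              rw [hgv, hhv]
            · exact hs11 Mg Mh hMne
            · rw [symp_neg_right]
              exact chi_neg_eq_one χ (hs12 Mg Mh hMne)
            · rw [symp_neg_left_swap]
              exact hs12 Mh Mg hMne.symm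
            · rw [symp_neg_left, symp_neg_right, neg_neg]
              exact hs22 Mg Mh hMne
          rw [AddChar.map_add_eq_mul, hA, hB, one_mul]
      · -- g = z k is isotropic
        have hhG : h ∈ Set.range u1 ∪ Set.range u2 ∪ Set.range z := Set.mem_union_left _ hh'
        rw [hvz k, symp_zero_left, add_zero]
        exact hiso k h hhG
    · -- h = z k is isotropic
      rw [hvz k, symp_zero_right, add_zero, symp_anti]
      exact chi_neg_eq_one χ (hiso k g hg)
  -- the image of the extended generators punctures back to the original ones
  have himg : ⇑(punctHom R n c) '' ((fun g => ext2 g (vmap u1 u2 a1 a2 g)) ''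
      (Set.range u1 ∪ Set.range u2 ∪ Set.range z)) =
      (Set.range u1 ∪ Set.range u2 ∪ Set.range z) := by
    rw [← Set.image_comp]
    have hid : (⇑(punctHom R n c)) ∘ (fun g => ext2 g (vmap u1 u2 a1 a2 g)) = id := by
      funext g
      exact punct_ext2 g _
    rw [hid, Set.image_id]
  refine ⟨AddSubgroup.closure ((fun g => ext2 g (vmap u1 u2 a1 a2 g)) ''
      (Set.range u1 ∪ Set.range u2 ∪ Set.range z)), ?_, ?_⟩
  · intro x hx y hy
    refine closure_orth χ _ ?_ x hx y hy
    rintro _ ⟨g, hg, rfl⟩ _ ⟨h, hh, rfl⟩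
    exact key g hg h hh
  · rw [show punct n c = ⇑(punctHom R n c) from rfl, ← AddSubgroup.coe_map,
      AddMonoidHom.map_closure, himg, hgen]
end

section
/- Let R be a finite commutative local Frobenius ring of characteristic p^b with generating character χ, and let C ⊆ R^{2n} be an additive code (a Z_{p^b}-module). Then C has a generating set as a Z_{p^b}-module consisting only of isotropic generators and hyperbolic pairs, and the number c of hyperbolic pairs satisfies 2c = rank(C / (C ∩ C^{⊥_χ})). -/
open scoped BigOperators

section Abstract

variable {V : Type*} [AddCommGroup V]

/-- An abstract alternating bi-additive pairing into `ℂˣ`. -/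
structure SympForm (V : Type*) [AddCommGroup V] where
  β : V → V → ℂˣ
  add_left : ∀ u v w, β (u + v) w = β u w * β v w
  skew : ∀ u v, β v u = (β u v)⁻¹

namespace SympForm

variable (B : SympForm V)

lemma zero_left (v : V) : B.β 0 v = 1 := by
  have h := B.add_left 0 0 v
  rw [add_zero] at h
  exact (right_eq_mul.mp h)

lemma add_right (u v w : V) : B.β u (v + w) = B.β u v * B.β u w := by
  rw [B.skew (v + w) u, B.add_left, B.skew v u, B.skew w u, mul_inv]

lemma zero_right (u : V) : B.β u 0 = 1 := by
  rw [B.skew, B.zero_left, inv_one]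

lemma neg_left (u v : V) : B.β (-u) v = (B.β u v)⁻¹ := by
  have h := B.add_left u (-u) v
  rw [add_neg_cancel, B.zero_left] at h
  exact eq_inv_of_mul_eq_one_right h.symm

lemma neg_right (u v : V) : B.β u (-v) = (B.β u v)⁻¹ := by
  rw [B.skew, B.neg_left, B.skew, inv_inv]

lemma nsmul_left (m : ℕ) (u v : V) : B.β (m • u) v = B.β u v ^ m := by
  induction m with
  | zero => simp [B.zero_left]
  | succ k ih => rw [succ_nsmul, B.add_left, ih, pow_succ]

lemma zsmul_left (m : ℤ) (u v : V) : B.β (m • u) v = B.β u v ^ m := by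
  induction m using Int.rec with
  | ofNat k => simpa using B.nsmul_left k u v
  | negSucc k =>
      rw [Int.negSucc_eq, neg_smul, B.neg_left,
        show ((k : ℤ) + 1) = ((k + 1 : ℕ) : ℤ) by push_cast; ring, natCast_zsmul,
        B.nsmul_left, zpow_neg, zpow_natCast]

lemma nsmul_right (m : ℕ) (u v : V) : B.β u (m • v) = B.β u v ^ m := by
  rw [B.skew, B.nsmul_left, B.skew, inv_pow, inv_inv]

lemma zsmul_right (m : ℤ) (u v : V) : B.β u (m • v) = B.β u v ^ m := by
  rw [B.skew, B.zsmul_left, B.skew, inv_zpow, inv_inv]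

/-- the left kernel of a fixed right argument -/
def lker (v : V) : AddSubgroup V where
  carrier := {u | B.β u v = 1}
  add_mem' := by intro a b ha hb; simp only [Set.mem_setOf_eq] at *; rw [B.add_left, ha, hb, mul_one]
  zero_mem' := B.zero_left v
  neg_mem' := by intro a ha; simp only [Set.mem_setOf_eq] at *; rw [B.neg_left, ha, inv_one]

lemma mem_lker {u v : V} : u ∈ B.lker v ↔ B.β u v = 1 := Iff.rfl

/-- the right kernel of a fixed left argument -/
def rker (u : V) : AddSubgroup V where
  carrier := {v | B.β u v = 1}
  add_mem' := by intro a b ha hb; simp only [Set.mem_setOf_eq] at *; rw [B.add_right, ha, hb, mul_one]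
  zero_mem' := B.zero_right u
  neg_mem' := by intro a ha; simp only [Set.mem_setOf_eq] at *; rw [B.neg_right, ha, inv_one]

lemma mem_rker {u v : V} : v ∈ B.rker u ↔ B.β u v = 1 := Iff.rfl

/-- the subgroup of `w` with `B.β u w ^ m = 1` -/
def rkerPow (u : V) (m : ℕ) : AddSubgroup V where
  carrier := {v | B.β u v ^ m = 1}
  add_mem' := by
    intro a b ha hb; simp only [Set.mem_setOf_eq] at *
    rw [B.add_right, mul_pow, ha, hb, mul_one]
  zero_mem' := by simp [B.zero_right]
  neg_mem' := by
    intro a ha; simp only [Set.mem_setOf_eq] at *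
    rw [B.neg_right, inv_pow, ha, inv_one]

lemma mem_rkerPow {u v : V} {m : ℕ} : v ∈ B.rkerPow u m ↔ B.β u v ^ m = 1 := Iff.rfl

end SympForm

end Abstract

section Decomp

variable {V : Type*} [AddCommGroup V] [Finite V]

open AddSubgroup

/-- The decomposition property. -/
def SympForm.P (B : SympForm V) (C : AddSubgroup V) : Prop :=
  ∃ (c : ℕ) (x y : Fin c → V) (C₀ : AddSubgroup V),
    (∀ i, x i ∈ C) ∧
    (∀ i, y i ∈ C) ∧
    C₀ ≤ C ∧
    (closure (Set.range x ∪ Set.range y) ⊔ C₀ = C) ∧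
    (∀ i j, B.β (x i) (x j) = 1) ∧
    (∀ i j, B.β (y i) (y j) = 1) ∧
    (∀ i j, i ≠ j → B.β (x i) (y j) = 1) ∧
    (∀ i, B.β (x i) (y i) ≠ 1) ∧
    (∀ i, ∀ v ∈ C₀, B.β (x i) v = 1) ∧
    (∀ i, ∀ v ∈ C₀, B.β (y i) v = 1) ∧
    (∀ u ∈ C₀, ∀ v ∈ C₀, B.β u v = 1) ∧
    (∀ i, ∀ v ∈ C, B.β (x i) v ^ orderOf (B.β (x i) (y i)) = 1) ∧
    (∀ i, ∀ v ∈ C, B.β (y i) v ^ orderOf (B.β (x i) (y i)) = 1)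

theorem SympForm.decomp (B : SympForm V) (p b : ℕ) (hp : p.Prime)
    (hdiag : ∀ u, B.β u u = 1)
    (hord : ∀ u v, B.β u v ^ p ^ b = 1) :
    ∀ (N : ℕ) (C : AddSubgroup V), Nat.card C ≤ N → B.P C := by
  intro N
  induction N with
  | zero =>
      intro C hC
      have : 0 < Nat.card C := Nat.card_pos
      omega
  | succ N ih =>
      intro C hC
      by_cases htriv : ∀ u ∈ C, ∀ v ∈ C, B.β u v = 1
      · refine ⟨0, Fin.elim0, Fin.elim0, C, (fun i => i.elim0), (fun i => i.elim0), le_rfl, ?_,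
          (fun i => i.elim0), (fun i => i.elim0), (fun i => i.elim0), (fun i => i.elim0),
          (fun i => i.elim0), (fun i => i.elim0), htriv, (fun i => i.elim0), (fun i => i.elim0)⟩
        simp
      · -- pick a pair of maximal order
        push_neg at htriv
        obtain ⟨u₀, hu₀, v₀, hv₀, hne₀⟩ := htriv
        set T : Set ℕ := {m | ∃ u ∈ C, ∃ v ∈ C, orderOf (B.β u v) = m} with hT
        have hTne : T.Nonempty := ⟨_, u₀, hu₀, v₀, hv₀, rfl⟩
        have hTbdd : BddAbove T := by
          refine ⟨p ^ b, fun m hm => ?_⟩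
          obtain ⟨u, -, v, -, rfl⟩ := hm
          exact Nat.le_of_dvd (pow_pos hp.pos b) (orderOf_dvd_of_pow_eq_one (hord u v))
        obtain ⟨x, hx, y, hy, ho⟩ := Nat.sSup_mem hTne hTbdd
        set o : ℕ := sSup T with hodef
        set ζ : ℂˣ := B.β x y with hζdef
        -- basic facts
        have hdvdpb : ∀ u v : V, orderOf (B.β u v) ∣ p ^ b :=
          fun u v => orderOf_dvd_of_pow_eq_one (hord u v)
        have hle : ∀ u ∈ C, ∀ v ∈ C, orderOf (B.β u v) ≤ o :=
          fun u hu v hv => le_csSup hTbdd ⟨u, hu, v, hv, rfl⟩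
        have hdvd : ∀ u ∈ C, ∀ v ∈ C, B.β u v ^ o = 1 := by
          intro u hu v hv
          obtain ⟨s, hs, hso⟩ := (Nat.dvd_prime_pow hp).mp (hdvdpb u v)
          have hodvd : o ∣ p ^ b := by rw [← ho]; exact hdvdpb x y
          obtain ⟨t, ht, hto⟩ := (Nat.dvd_prime_pow hp).mp hodvd
          have hst : s ≤ t := by
            have := hle u hu v hv
            rw [hso, hto] at this
            exact (Nat.pow_le_pow_iff_right hp.one_lt).mp this
          have : orderOf (B.β u v) ∣ o := by
            rw [hso, hto]; exact pow_dvd_pow p hst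
          exact orderOf_dvd_iff_pow_eq_one.mp this
        have hopos : 2 ≤ orderOf (B.β u₀ v₀) := by
          have h1 : orderOf (B.β u₀ v₀) ≠ 1 := by
            simpa [orderOf_eq_one_iff] using hne₀
          have h0 : 0 < orderOf (B.β u₀ v₀) :=
            orderOf_pos_iff.mpr (isOfFinOrder_iff_pow_eq_one.mpr
              ⟨p ^ b, pow_pos hp.pos b, hord _ _⟩)
          omega
        have ho2 : 2 ≤ o := le_trans hopos (hle u₀ hu₀ v₀ hv₀)
        have hζne : ζ ≠ 1 := by
          intro h
          rw [h, orderOf_one] at ho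
          omega
        have : NeZero o := ⟨by omega⟩
        have hprim : IsPrimitiveRoot ζ o := by
          rw [← ho]; exact IsPrimitiveRoot.orderOf ζ
        have hpow : ∀ u ∈ C, ∀ v ∈ C, ∃ m : ℤ, B.β u v = ζ ^ m := by
          intro u hu v hv
          have hmem : B.β u v ∈ rootsOfUnity o ℂ := by
            rw [mem_rootsOfUnity]
            exact_mod_cast hdvd u hu v hv
          obtain ⟨i, -, hi⟩ := hprim.eq_pow_of_mem_rootsOfUnity hmem
          exact ⟨(i : ℤ), by rw [zpow_natCast, hi]⟩
        -- the orthogonal complement of the chosen pair inside C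
        set C' : AddSubgroup V := C ⊓ B.rker x ⊓ B.rker y with hC'def
        have hC'le : C' ≤ C := le_trans inf_le_left inf_le_left
        have hxC' : ∀ v ∈ C', B.β x v = 1 := fun v hv => hv.1.2
        have hyC' : ∀ v ∈ C', B.β y v = 1 := fun v hv => hv.2
        have hsplit : ∀ v ∈ C, ∃ a bb : ℤ, v + (-a) • y + bb • x ∈ C' := by
          intro v hv
          obtain ⟨a, ha⟩ := hpow x hx v hv
          obtain ⟨bb, hbb⟩ := hpow y hy v hv
          refine ⟨a, bb, ?_, ?_⟩
          · constructor
            · exact add_mem (add_mem hv (zsmul_mem hy _)) (zsmul_mem hx _)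
            · show B.β x _ = 1
              rw [B.add_right, B.add_right, B.zsmul_right, B.zsmul_right, ha, hdiag,
                one_zpow, mul_one, ← hζdef, ← zpow_add, add_neg_cancel, zpow_zero]
          · show B.β y _ = 1
            have hyx : B.β y x = ζ⁻¹ := by rw [B.skew x y, hζdef]
            rw [B.add_right, B.add_right, B.zsmul_right, B.zsmul_right, hbb, hdiag,
              one_zpow, mul_one, hyx, inv_zpow, ← zpow_neg, ← zpow_add, add_neg_cancel, zpow_zero]
        have hCeq : closure ({x} ∪ {y}) ⊔ C' = C := by
          apply le_antisymm
          · refine sup_le ((closure_le _).mpr ?_) hC'le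
            intro w hw
            rcases hw with hw | hw
            · simp only [Set.mem_singleton_iff] at hw; subst hw; exact hx
            · simp only [Set.mem_singleton_iff] at hw; subst hw; exact hy
          · intro v hv
            obtain ⟨a, bb, hmem⟩ := hsplit v hv
            have hveq : v = (a • y + (-bb) • x) + (v + (-a) • y + bb • x) := by module
            rw [hveq]
            refine add_mem (mem_sup_left (add_mem ?_ ?_)) (mem_sup_right hmem)
            · exact zsmul_mem (subset_closure (by simp)) a
            · exact zsmul_mem (subset_closure (by simp)) (-bb)
        have hyne : y ∉ C' := fun hmem => hζne (hxC' y hmem)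
        have hcard : Nat.card C' < Nat.card C := by
          have e1 : Nat.card C' = ((C' : Set V)).ncard := Nat.card_coe_set_eq _
          have e2 : Nat.card C = ((C : Set V)).ncard := Nat.card_coe_set_eq _
          rw [e1, e2]
          exact Set.ncard_lt_ncard ⟨hC'le, fun habs => hyne (habs hy)⟩ (Set.toFinite _)
        obtain ⟨c', x', y', C₀, p1, p2, p3, p4, p5, p6, p7, p8, p9, p10, p11, p12, p13⟩ :=
          ih C' (by omega)
        have hβxx' : ∀ i, B.β x (x' i) = 1 := fun i => hxC' _ (p1 i)
        have hβxy' : ∀ i, B.β x (y' i) = 1 := fun i => hxC' _ (p2 i)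
        have hβyx' : ∀ i, B.β y (x' i) = 1 := fun i => hyC' _ (p1 i)
        have hβyy' : ∀ i, B.β y (y' i) = 1 := fun i => hyC' _ (p2 i)
        have hinv : ∀ w₁ w₂ : V, B.β w₁ w₂ = 1 → B.β w₂ w₁ = 1 := by
          intro w₁ w₂ h; rw [B.skew w₁ w₂, h, inv_one]
        refine ⟨c' + 1, Fin.cons x x', Fin.cons y y', C₀, ?_, ?_, ?_, ?_, ?_, ?_, ?_, ?_, ?_, ?_,
          ?_, ?_, ?_⟩
        · intro i
          induction i using Fin.cases with
          | zero => simpa using hx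
          | succ i => simpa using hC'le (p1 i)
        · intro i
          induction i using Fin.cases with
          | zero => simpa using hy
          | succ i => simpa using hC'le (p2 i)
        · exact le_trans p3 hC'le
        · rw [Fin.range_cons, Fin.range_cons,
            show insert x (Set.range x') ∪ insert y (Set.range y')
              = ({x} ∪ {y}) ∪ (Set.range x' ∪ Set.range y') by
                ext w; simp only [Set.mem_union, Set.mem_insert_iff, Set.mem_singleton_iff]
                tauto,
            AddSubgroup.closure_union, sup_assoc, p4, hCeq]
        · intro i j
          induction i using Fin.cases with
          | zero =>
            induction j using Fin.cases with
            | zero => simpa using hdiag x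
            | succ j => simpa using hβxx' j
          | succ i =>
            induction j using Fin.cases with
            | zero => simpa using hinv _ _ (hβxx' i)
            | succ j => simpa using p5 i j
        · intro i j
          induction i using Fin.cases with
          | zero =>
            induction j using Fin.cases with
            | zero => simpa using hdiag y
            | succ j => simpa using hβyy' j
          | succ i =>
            induction j using Fin.cases with
            | zero => simpa using hinv _ _ (hβyy' i)
            | succ j => simpa using p6 i j
        · intro i j hij
          induction i using Fin.cases with
          | zero =>
            induction j using Fin.cases with
            | zero => exact absurd rfl hij
            | succ j => simpa using hβxy' j
          | succ i =>
            induction j using Fin.cases with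
            | zero => simpa using hinv _ _ (hβyx' i)
            | succ j =>
              have : i ≠ j := fun h => hij (by rw [h])
              simpa using p7 i j this
        · intro i
          induction i using Fin.cases with
          | zero => simpa using hζne
          | succ i => simpa using p8 i
        · intro i
          induction i using Fin.cases with
          | zero => intro v hv; simpa using hxC' v (p3 hv)
          | succ i => intro v hv; simpa using p9 i v hv
        · intro i
          induction i using Fin.cases with
          | zero => intro v hv; simpa using hyC' v (p3 hv)
          | succ i => intro v hv; simpa using p10 i v hv
        · exact p11
        · intro i
          induction i using Fin.cases with
          | zero =>
            intro v hv
            have : orderOf (B.β x y) = o := ho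
            simpa [this] using hdvd x hx v hv
          | succ i =>
            have hker : C ≤ B.rkerPow (x' i) (orderOf (B.β (x' i) (y' i))) := by
              rw [← hCeq]
              refine sup_le ((closure_le _).mpr ?_) ?_
              · intro w hw
                have hw1 : w = x ∨ w = y := by
                  rcases hw with hw | hw
                  · exact Or.inl (Set.mem_singleton_iff.mp hw)
                  · exact Or.inr (Set.mem_singleton_iff.mp hw)
                rcases hw1 with hw1 | hw1
                · rw [hw1]
                  show B.β (x' i) x ^ _ = 1
                  rw [hinv _ _ (hβxx' i), one_pow]
                · rw [hw1]
                  show B.β (x' i) y ^ _ = 1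
                  rw [hinv _ _ (hβyx' i), one_pow]
              · exact fun v hv => p12 i v hv
            intro v hv
            exact hker hv
        · intro i
          induction i using Fin.cases with
          | zero =>
            intro v hv
            have : orderOf (B.β x y) = o := ho
            simpa [this] using hdvd y hy v hv
          | succ i =>
            have hker : C ≤ B.rkerPow (y' i) (orderOf (B.β (x' i) (y' i))) := by
              rw [← hCeq]
              refine sup_le ((closure_le _).mpr ?_) ?_
              · intro w hw
                have hw1 : w = x ∨ w = y := by
                  rcases hw with hw | hw
                  · exact Or.inl (Set.mem_singleton_iff.mp hw)
                  · exact Or.inr (Set.mem_singleton_iff.mp hw)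
                rcases hw1 with hw1 | hw1
                · rw [hw1]
                  show B.β (y' i) x ^ _ = 1
                  rw [hinv _ _ (hβxy' i), one_pow]
                · rw [hw1]
                  show B.β (y' i) y ^ _ = 1
                  rw [hinv _ _ (hβyy' i), one_pow]
              · exact fun v hv => p13 i v hv
            intro v hv
            exact hker hv

end Decomp

section Main

open AddSubgroup

variable {V : Type*} [AddCommGroup V] [Finite V]

namespace SympForm

variable (B : SympForm V)

/-- The dual (as an `AddSubgroup`) of a subgroup `C`. -/
def dualSG (C : AddSubgroup V) : AddSubgroup V where
  carrier := {v | ∀ u ∈ C, B.β u v = 1}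
  add_mem' := by
    intro a bb ha hb u hu
    rw [B.add_right, ha u hu, hb u hu, mul_one]
  zero_mem' := fun u _ => B.zero_right u
  neg_mem' := by
    intro a ha u hu
    rw [B.neg_right, ha u hu, inv_one]

lemma mem_dualSG {C : AddSubgroup V} {v : V} : v ∈ B.dualSG C ↔ ∀ u ∈ C, B.β u v = 1 := Iff.rfl

lemma sum_left {ι : Type*} (s : Finset ι) (t : ι → V) (w : V) :
    B.β (∑ j ∈ s, t j) w = ∏ j ∈ s, B.β (t j) w := by
  classical
  induction s using Finset.cons_induction with
  | empty => simp [B.zero_left]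
  | cons j s hj ih => rw [Finset.sum_cons, Finset.prod_cons, B.add_left, ih]

lemma pow_inj_of_orderOf_eq {p : ℕ} (ξ : ℂˣ) (hξ : orderOf ξ = p) {m m' : ℕ}
    (hm : m < p) (hm' : m' < p) (h : ξ ^ m = ξ ^ m') : m = m' := by
  rcases le_total m m' with hle | hle
  · have h1 : ξ ^ (m' - m) = 1 := by
      have hh : ξ ^ (m' - m) * ξ ^ m = 1 * ξ ^ m := by
        rw [← pow_add, Nat.sub_add_cancel hle, one_mul, h]
      exact mul_right_cancel hh
    have hdvd : p ∣ m' - m := hξ ▸ orderOf_dvd_of_pow_eq_one h1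
    rcases Nat.eq_zero_of_dvd_of_lt hdvd (by omega) with h0
    omega
  · have h1 : ξ ^ (m - m') = 1 := by
      have hh : ξ ^ (m - m') * ξ ^ m' = 1 * ξ ^ m' := by
        rw [← pow_add, Nat.sub_add_cancel hle, one_mul, h.symm]
      exact mul_right_cancel hh
    have hdvd : p ∣ m - m' := hξ ▸ orderOf_dvd_of_pow_eq_one h1
    rcases Nat.eq_zero_of_dvd_of_lt hdvd (by omega) with h0
    omega

end SympForm

end Main

section MainThm

open AddSubgroup

variable {V : Type*} [AddCommGroup V] [Finite V]

theorem SympForm.main (B : SympForm V) (p b : ℕ) (hp : p.Prime)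
    (hdiag : ∀ u, B.β u u = 1) (hord : ∀ u v, B.β u v ^ p ^ b = 1)
    (C : AddSubgroup V) :
    ∃ (c d : ℕ) (u1 u2 : Fin c → V) (z : Fin d → V),
      closure (Set.range u1 ∪ Set.range u2 ∪ Set.range z) = C ∧
      (∀ j, ∀ h ∈ Set.range u1 ∪ Set.range u2 ∪ Set.range z, B.β (z j) h = 1) ∧
      (∀ i, B.β (u1 i) (u2 i) ≠ 1) ∧
      (∀ i, ∀ h ∈ Set.range u1 ∪ Set.range u2 ∪ Set.range z,
        h ≠ u2 i → B.β (u1 i) h = 1) ∧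
      (∀ i, ∀ h ∈ Set.range u1 ∪ Set.range u2 ∪ Set.range z,
        h ≠ u1 i → B.β (u2 i) h = 1) ∧
      2 * c = sInf {k : ℕ | ∃ f : Fin k → V, (∀ i, f i ∈ C) ∧
        ∀ v ∈ (C : Set V), ∃ g : Fin k → ℤ, ∀ u ∈ C, B.β u (v - ∑ i, g i • f i) = 1} := by
  classical
  haveI : NeZero p := ⟨hp.ne_zero⟩
  obtain ⟨c, x, y, C₀, p1, p2, p3, p4, p5, p6, p7, p8, p9, p10, p11, p12, p13⟩ :=
    B.decomp p b hp hdiag hord (Nat.card C) C le_rfl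
  have hinv : ∀ w₁ w₂ : V, B.β w₁ w₂ = 1 → B.β w₂ w₁ = 1 := by
    intro w₁ w₂ h; rw [B.skew w₁ w₂, h, inv_one]
  -- the radical
  set D : AddSubgroup V := C ⊓ B.dualSG C with hD
  have hC₀D : C₀ ≤ D := by
    intro v hv
    refine ⟨p3 hv, ?_⟩
    have hC : C ≤ B.lker v := by
      rw [← p4]
      refine sup_le ((closure_le _).mpr ?_) (fun u hu => p11 u hu v hv)
      rintro w (⟨i, rfl⟩ | ⟨i, rfl⟩)
      · exact p9 i v hv
      · exact p10 i v hv
    exact fun u hu => hC hu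
  -- enumerate D
  obtain ⟨e⟩ : Nonempty (Fin (Nat.card D) ≃ D) := ⟨(Finite.equivFin D).symm⟩
  set z : Fin (Nat.card D) → V := fun j => (e j : V) with hz
  have hzD : ∀ j, z j ∈ D := fun j => (e j).2
  have hrangez : Set.range z = (D : Set V) := by
    ext w
    constructor
    · rintro ⟨j, rfl⟩; exact (e j).2
    · intro hw; exact ⟨e.symm ⟨w, hw⟩, by simp [hz]⟩
  -- generators are in C
  have hhC : ∀ h ∈ Set.range x ∪ Set.range y ∪ Set.range z, h ∈ C := by
    rintro h ((⟨i, rfl⟩ | ⟨i, rfl⟩) | ⟨j, rfl⟩)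
    · exact p1 i
    · exact p2 i
    · exact (hzD j).1
  -- generation
  have hgen : closure (Set.range x ∪ Set.range y ∪ Set.range z) = C := by
    apply le_antisymm
    · exact (closure_le _).mpr (fun h hh => hhC h hh)
    · rw [← p4]
      refine sup_le ?_ ?_
      · apply AddSubgroup.closure_mono
        intro w hw
        exact Or.inl hw
      · intro v hv
        apply AddSubgroup.subset_closure
        exact Or.inr (hrangez ▸ (hC₀D hv : v ∈ D))
  -- β of z with everything in C is 1
  have hzperp : ∀ j, ∀ u ∈ C, B.β (z j) u = 1 :=
    fun j u hu => hinv _ _ ((hzD j).2 u hu)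
  -- the four structural conditions
  refine ⟨c, Nat.card D, x, y, z, hgen, ?_, ?_, ?_, ?_, ?_⟩
  · exact fun j h hh => hzperp j h (hhC h hh)
  · exact p8
  · rintro i h ((⟨j, rfl⟩ | ⟨j, rfl⟩) | ⟨j, rfl⟩) hne
    · exact p5 i j
    · refine p7 i j (fun hij => hne ?_)
      rw [hij]
    · exact hinv _ _ (hzperp j (x i) (p1 i))
  · rintro i h ((⟨j, rfl⟩ | ⟨j, rfl⟩) | ⟨j, rfl⟩) hne
    · refine hinv _ _ (p7 j i (fun hij => hne ?_))
      rw [hij]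
    · exact p6 i j
    · exact hinv _ _ (hzperp j (y i) (p2 i))
  -- now the rank statement
  -- orders of the hyperbolic pairs
  have hoidvd : ∀ i, orderOf (B.β (x i) (y i)) ∣ p ^ b :=
    fun i => orderOf_dvd_of_pow_eq_one (hord _ _)
  have hoine : ∀ i, orderOf (B.β (x i) (y i)) ≠ 1 :=
    fun i => by simpa [orderOf_eq_one_iff] using p8 i
  have hoipos : ∀ i, 0 < orderOf (B.β (x i) (y i)) := by
    intro i
    rcases Nat.eq_zero_or_pos (orderOf (B.β (x i) (y i))) with h0 | h0
    · exfalso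
      have h1 := hoidvd i
      rw [h0] at h1
      exact (pow_ne_zero b hp.ne_zero) (Nat.eq_zero_of_zero_dvd h1)
    · exact h0
  have hpd : ∀ i, p ∣ orderOf (B.β (x i) (y i)) := by
    intro i
    obtain ⟨t, ht, h⟩ := (Nat.dvd_prime_pow hp).mp (hoidvd i)
    cases t with
    | zero => exact absurd (by simpa using h) (hoine i)
    | succ t => rw [h]; exact dvd_pow_self p t.succ_ne_zero
  have hmi : ∀ i, orderOf (B.β (x i) (y i)) / p * p = orderOf (B.β (x i) (y i)) :=
    fun i => Nat.div_mul_cancel (hpd i)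
  set ξ : Fin c → ℂˣ := fun i => B.β (x i) (y i) ^ (orderOf (B.β (x i) (y i)) / p) with hξdef
  have hξp : ∀ i, ξ i ^ p = 1 := by
    intro i
    rw [hξdef, ← pow_mul, hmi i, pow_orderOf_eq_one]
  have hξne : ∀ i, ξ i ≠ 1 := by
    intro i h
    have hdvd' : orderOf (B.β (x i) (y i)) ∣ orderOf (B.β (x i) (y i)) / p :=
      orderOf_dvd_of_pow_eq_one h
    have hdivpos : 0 < orderOf (B.β (x i) (y i)) / p :=
      Nat.div_pos (Nat.le_of_dvd (hoipos i) (hpd i)) hp.pos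
    have := Nat.le_of_dvd hdivpos hdvd'
    have := Nat.div_lt_self (hoipos i) hp.one_lt
    omega
  have hξord : ∀ i, orderOf (ξ i) = p := by
    intro i
    rcases (Nat.Prime.eq_one_or_self_of_dvd hp _ (orderOf_dvd_of_pow_eq_one (hξp i))) with h | h
    · exact absurd (orderOf_eq_one_iff.mp h) (hξne i)
    · exact h
  -- the p-torsion morphism
  set Φ : V → (Fin c → ℂˣ × ℂˣ) := fun v i =>
    ((B.β v (x i)) ^ (orderOf (B.β (x i) (y i)) / p),
     (B.β v (y i)) ^ (orderOf (B.β (x i) (y i)) / p)) with hΦdef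
  have hΦadd : ∀ u v, Φ (u + v) = Φ u * Φ v := by
    intro u v
    funext i
    show ((_ : ℂˣ), (_ : ℂˣ)) = ((_ : ℂˣ), (_ : ℂˣ)) * ((_ : ℂˣ), (_ : ℂˣ))
    rw [Prod.mk_mul_mk, B.add_left, B.add_left, mul_pow, mul_pow]
  have hΦzero : Φ 0 = 1 := by
    funext i
    show (_, _) = 1
    rw [B.zero_left, B.zero_left, one_pow]
    rfl
  have hΦneg : ∀ v, Φ (-v) = (Φ v)⁻¹ := by
    intro v
    have h := hΦadd v (-v)
    rw [add_neg_cancel, hΦzero] at h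
    exact eq_inv_of_mul_eq_one_right h.symm
  have hΦnsmul : ∀ (m : ℕ) (v : V), Φ (m • v) = Φ v ^ m := by
    intro m v
    induction m with
    | zero => simpa using hΦzero
    | succ k ih => rw [succ_nsmul, hΦadd, ih, pow_succ]
  have hΦzsmul : ∀ (m : ℤ) (v : V), Φ (m • v) = Φ v ^ m := by
    intro m v
    induction m using Int.rec with
    | ofNat k => simpa using hΦnsmul k v
    | negSucc k =>
        rw [Int.negSucc_eq, neg_smul, hΦneg,
          show ((k : ℤ) + 1) = ((k + 1 : ℕ) : ℤ) by push_cast; ring, natCast_zsmul,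
          hΦnsmul, zpow_neg, zpow_natCast]
  have hΦsum : ∀ {ι : Type} (s : Finset ι) (t : ι → V),
      Φ (∑ j ∈ s, t j) = ∏ j ∈ s, Φ (t j) := by
    intro ι s t
    induction s using Finset.cons_induction with
    | empty => simpa using hΦzero
    | cons j s hj ih => rw [Finset.sum_cons, Finset.prod_cons, hΦadd, ih]
  have hΦp : ∀ v ∈ C, Φ v ^ p = 1 := by
    intro v hv
    funext i
    have h1 : B.β v (x i) ^ orderOf (B.β (x i) (y i)) = 1 := by
      rw [B.skew (x i) v, inv_pow, p12 i v hv, inv_one]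
    have h2 : B.β v (y i) ^ orderOf (B.β (x i) (y i)) = 1 := by
      rw [B.skew (y i) v, inv_pow, p13 i v hv, inv_one]
    show (Φ v ^ p) i = (1 : ℂˣ × ℂˣ)
    rw [Pi.pow_apply]
    show (_, _) ^ p = (1 : ℂˣ × ℂˣ)
    rw [Prod.pow_mk, ← pow_mul, ← pow_mul, hmi i, h1, h2]
    rfl
  have hΦdual : ∀ v, (∀ u ∈ C, B.β u v = 1) → Φ v = 1 := by
    intro v hv
    funext i
    have h1 : B.β v (x i) = 1 := hinv _ _ (hv (x i) (p1 i))
    have h2 : B.β v (y i) = 1 := hinv _ _ (hv (y i) (p2 i))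
    show (_, _) = (1 : ℂˣ × ℂˣ)
    rw [h1, h2, one_pow]
    rfl
  -- the target set for the sInf
  set S : Set ℕ := {k : ℕ | ∃ f : Fin k → V, (∀ i, f i ∈ C) ∧
    ∀ v ∈ (C : Set V), ∃ g : Fin k → ℤ, ∀ u ∈ C, B.β u (v - ∑ i, g i • f i) = 1} with hS
  -- membership: the pairs generate mod the radical
  have hmemS : 2 * c ∈ S := by
    set f : Fin (2 * c) → V := fun j =>
      if h : (j : ℕ) < c then x ⟨j, h⟩ else y ⟨(j : ℕ) - c, by omega⟩ with hf
    have hrangef : Set.range f = Set.range x ∪ Set.range y := by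
      ext w
      constructor
      · rintro ⟨j, rfl⟩
        by_cases h : (j : ℕ) < c
        · exact Or.inl ⟨⟨j, h⟩, by simp [hf, h]⟩
        · exact Or.inr ⟨⟨(j : ℕ) - c, by omega⟩, by simp [hf, h]⟩
      · rintro (⟨i, rfl⟩ | ⟨i, rfl⟩)
        · refine ⟨⟨(i : ℕ), by omega⟩, ?_⟩
          simp only [hf]
          rw [dif_pos (by simpa using i.2)]
        · refine ⟨⟨c + (i : ℕ), by omega⟩, ?_⟩
          simp only [hf]
          rw [dif_neg (by omega)]
          congr 1
          ext
          simp
    refine ⟨f, ?_, ?_⟩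
    · intro j
      by_cases h : (j : ℕ) < c
      · simpa [hf, h] using p1 _
      · simpa [hf, h] using p2 _
    · intro v hv
      rw [show (C : Set V) = ((closure (Set.range x ∪ Set.range y) ⊔ C₀ : AddSubgroup V) : Set V)
        by rw [p4]] at hv
      obtain ⟨w, hw, v₀, hv₀, hsum⟩ := mem_sup.mp hv
      have hw' : w ∈ Submodule.span ℤ (Set.range f) := by
        rw [← Submodule.mem_toAddSubgroup, Submodule.span_int_eq_addSubgroupClosure, hrangef]
        exact hw
      obtain ⟨g, hg⟩ := (Submodule.mem_span_range_iff_exists_fun ℤ).mp hw'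
      refine ⟨g, ?_⟩
      have : v - ∑ i, g i • f i = v₀ := by
        rw [hg, ← hsum, add_sub_cancel_left]
      rw [this]
      exact fun u hu => (hC₀D hv₀).2 u hu
  -- lower bound
  have hlow : ∀ k ∈ S, 2 * c ≤ k := by
    intro k hk
    obtain ⟨f, hf, hgen'⟩ := hk
    -- the two maps whose ranges we compare
    set F : (Fin k → ZMod p) → (Fin c → ℂˣ × ℂˣ) := fun m => ∏ j, Φ (f j) ^ (m j).val with hF
    set E : ((Fin c → ZMod p) × (Fin c → ZMod p)) → (Fin c → ℂˣ × ℂˣ) := fun ab =>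
      Φ ((∑ j, (ab.1 j).val • y j) + (∑ j, (ab.2 j).val • x j)) with hE
    -- reduction of integer powers mod p
    have hred : ∀ (G : Type) [inst : Group G] (a : G), a ^ p = 1 → ∀ g : ℤ,
        a ^ g = a ^ ((g : ZMod p)).val := by
      intro G _ a ha g
      conv_lhs => rw [← Int.mul_ediv_add_emod g p]
      rw [zpow_add, zpow_mul, zpow_natCast, ha, one_zpow, one_mul]
      have hval : ((((g : ZMod p)).val : ℤ)) = g % p := ZMod.val_intCast g
      rw [← zpow_natCast, hval]
    -- every E value is an F value
    have hEF : ∀ ab, ∃ m, E ab = F m := by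
      intro ab
      set e : V := (∑ j, (ab.1 j).val • y j) + (∑ j, (ab.2 j).val • x j) with he
      have heC : e ∈ C := by
        refine add_mem (sum_mem ?_) (sum_mem ?_)
        · exact fun j _ => nsmul_mem (p2 j) _
        · exact fun j _ => nsmul_mem (p1 j) _
      obtain ⟨g, hg⟩ := hgen' e heC
      refine ⟨fun j => ((g j : ZMod p)), ?_⟩
      have hsplit : e = (e - ∑ j, g j • f j) + ∑ j, g j • f j := by abel
      calc E ab = Φ e := rfl
        _ = Φ (e - ∑ j, g j • f j) * Φ (∑ j, g j • f j) := by rw [← hΦadd, ← hsplit]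
        _ = Φ (∑ j, g j • f j) := by rw [hΦdual _ (hg), one_mul]
        _ = ∏ j, Φ (g j • f j) := hΦsum _ _
        _ = ∏ j, Φ (f j) ^ (g j) := by
            refine Finset.prod_congr rfl (fun j _ => ?_)
            exact hΦzsmul (g j) (f j)
        _ = F (fun j => ((g j : ZMod p))) := by
            refine Finset.prod_congr rfl (fun j _ => ?_)
            exact hred _ _ (hΦp (f j) (hf j)) (g j)
    -- explicit formula for E
    have hEformula : ∀ ab i, E ab = E ab → (E ab i).1 = ((ξ i)⁻¹) ^ ((ab.1 i)).val ∧
        (E ab i).2 = (ξ i) ^ ((ab.2 i)).val := by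
      intro ab i _
      set e : V := (∑ j, (ab.1 j).val • y j) + (∑ j, (ab.2 j).val • x j) with he
      have hbx : B.β e (x i) = ((B.β (x i) (y i))⁻¹) ^ ((ab.1 i)).val := by
        rw [he, B.add_left, B.sum_left, B.sum_left]
        have h2 : ∏ j, B.β ((ab.2 j).val • x j) (x i) = 1 := by
          refine Finset.prod_eq_one (fun j _ => ?_)
          rw [B.nsmul_left, p5 j i, one_pow]
        have h1 : ∏ j, B.β ((ab.1 j).val • y j) (x i)
            = ((B.β (x i) (y i))⁻¹) ^ ((ab.1 i)).val := by
          rw [Finset.prod_eq_single i]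
          · rw [B.nsmul_left, B.skew (x i) (y i)]
          · intro j _ hji
            rw [B.nsmul_left, hinv _ _ (p7 i j (fun h => hji (by rw [h]))), one_pow]
          · intro h
            exact absurd (Finset.mem_univ i) h
        rw [h1, h2, mul_one]
      have hby : B.β e (y i) = (B.β (x i) (y i)) ^ ((ab.2 i)).val := by
        rw [he, B.add_left, B.sum_left, B.sum_left]
        have h1 : ∏ j, B.β ((ab.1 j).val • y j) (y i) = 1 := by
          refine Finset.prod_eq_one (fun j _ => ?_)
          rw [B.nsmul_left, p6 j i, one_pow]
        have h2 : ∏ j, B.β ((ab.2 j).val • x j) (y i)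
            = (B.β (x i) (y i)) ^ ((ab.2 i)).val := by
          rw [Finset.prod_eq_single i]
          · rw [B.nsmul_left]
          · intro j _ hji
            rw [B.nsmul_left, p7 j i (fun h => hji h), one_pow]
          · intro h
            exact absurd (Finset.mem_univ i) h
        rw [h1, h2, one_mul]
      constructor
      · show (B.β e (x i)) ^ _ = _
        rw [hbx, pow_right_comm, ← inv_pow]
      · show (B.β e (y i)) ^ _ = _
        rw [hby, pow_right_comm]
    -- E is injective
    have hEinj : Function.Injective E := by
      intro ab ab' heq
      have hvals : ∀ i, ((ξ i)⁻¹) ^ ((ab.1 i)).val = ((ξ i)⁻¹) ^ ((ab'.1 i)).val ∧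
          (ξ i) ^ ((ab.2 i)).val = (ξ i) ^ ((ab'.2 i)).val := by
        intro i
        have h1 := hEformula ab i rfl
        have h2 := hEformula ab' i rfl
        constructor
        · rw [← h1.1, ← h2.1, heq]
        · rw [← h1.2, ← h2.2, heq]
      have hordinv : ∀ i, orderOf ((ξ i)⁻¹) = p := by
        intro i; rw [orderOf_inv, hξord i]
      refine Prod.ext ?_ ?_
      · funext i
        exact ZMod.val_injective p (SympForm.pow_inj_of_orderOf_eq _ (hordinv i)
          (ZMod.val_lt _) (ZMod.val_lt _) (hvals i).1)
      · funext i
        exact ZMod.val_injective p (SympForm.pow_inj_of_orderOf_eq _ (hξord i)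
          (ZMod.val_lt _) (ZMod.val_lt _) (hvals i).2)
    -- cardinality comparison
    have hcard1 : Nat.card (Set.range E) = p ^ (2 * c) := by
      rw [Nat.card_congr (Equiv.ofInjective E hEinj).symm, Nat.card_prod, Nat.card_fun,
        Nat.card_zmod, Nat.card_eq_fintype_card (α := Fin c), Fintype.card_fin, ← pow_add,
        two_mul]
    have hcard2 : Nat.card (Set.range F) ≤ p ^ k := by
      calc Nat.card (Set.range F) ≤ Nat.card (Fin k → ZMod p) := Finite.card_range_le F
        _ = p ^ k := by
            rw [Nat.card_fun, Nat.card_zmod, Nat.card_eq_fintype_card (α := Fin k),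
              Fintype.card_fin]
    have hsub : Set.range E ⊆ Set.range F := by
      rintro w ⟨ab, rfl⟩
      obtain ⟨m, hm⟩ := hEF ab
      exact ⟨m, hm.symm⟩
    have hmono : Nat.card (Set.range E) ≤ Nat.card (Set.range F) := by
      have e1 : Nat.card (Set.range E) = (Set.range E).ncard := Nat.card_coe_set_eq _
      have e2 : Nat.card (Set.range F) = (Set.range F).ncard := Nat.card_coe_set_eq _
      rw [e1, e2]
      exact Set.ncard_le_ncard hsub (Set.finite_range F)
    have hpow : p ^ (2 * c) ≤ p ^ k := by omega
    exact (Nat.pow_le_pow_iff_right hp.one_lt).mp hpow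
  exact le_antisymm (le_csInf ⟨2 * c, hmemS⟩ hlow) (Nat.sInf_le hmemS)

end MainThm

theorem stmt_9 (p b : ℕ) (hp : p.Prime) (hb : 0 < b)
    (R : Type) [CommRing R] [Fintype R] [IsLocalRing R] [CharP R (p ^ b)]
    (χ : AddChar R ℂ)
    (hχ : ∀ ψ : AddChar R ℂ, ∃ r : R, ∀ t : R, ψ t = χ (r * t))
    (n : ℕ)
    (C : AddSubgroup ((Fin n → R) × (Fin n → R))) :
    ∃ (c d : ℕ) (u1 u2 : Fin c → (Fin n → R) × (Fin n → R))
      (z : Fin d → (Fin n → R) × (Fin n → R)),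
      AddSubgroup.closure (Set.range u1 ∪ Set.range u2 ∪ Set.range z) = C ∧
      (∀ j, ∀ h ∈ Set.range u1 ∪ Set.range u2 ∪ Set.range z,
        χ (symp (z j) h) = 1) ∧
      (∀ i, χ (symp (u1 i) (u2 i)) ≠ 1) ∧
      (∀ i, ∀ h ∈ Set.range u1 ∪ Set.range u2 ∪ Set.range z,
        h ≠ u2 i → χ (symp (u1 i) h) = 1) ∧
      (∀ i, ∀ h ∈ Set.range u1 ∪ Set.range u2 ∪ Set.range z,
        h ≠ u1 i → χ (symp (u2 i) h) = 1) ∧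
      2 * c = relRank (C : Set ((Fin n → R) × (Fin n → R))) (chiDualSet (⇑χ) (C : Set ((Fin n → R) × (Fin n → R)))) := by
  classical
  set V := (Fin n → R) × (Fin n → R) with hV
  -- the unit-valued character
  set χu : R → ℂˣ := fun r => (χ.val_isUnit r).unit with hχu
  have hχuval : ∀ r, ((χu r : ℂˣ) : ℂ) = χ r := fun r => (χ.val_isUnit r).unit_spec
  have hχuadd : ∀ r s, χu (r + s) = χu r * χu s := by
    intro r s
    ext
    rw [Units.val_mul, hχuval, hχuval, hχuval, AddChar.map_add_eq_mul]
  have hχuzero : χu 0 = 1 := by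
    ext
    rw [hχuval, AddChar.map_zero_eq_one, Units.val_one]
  have hχuneg : ∀ r, χu (-r) = (χu r)⁻¹ := by
    intro r
    have h := hχuadd r (-r)
    rw [add_neg_cancel, hχuzero] at h
    exact eq_inv_of_mul_eq_one_right h.symm
  have hχunsmul : ∀ (m : ℕ) (r : R), χu (m • r) = χu r ^ m := by
    intro m r
    induction m with
    | zero => simpa using hχuzero
    | succ k ih => rw [succ_nsmul, hχuadd, ih, pow_succ]
  have hone : ∀ r : R, χu r = 1 ↔ χ r = 1 := by
    intro r
    constructor
    · intro h
      have := hχuval r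
      rw [h, Units.val_one] at this
      exact this.symm
    · intro h
      ext
      rw [hχuval, h, Units.val_one]
  -- symplectic form basics
  have hsympadd : ∀ u v w : V, symp (u + v) w = symp u w + symp v w := by
    intro u v w
    have e1 : (u + v).1 = u.1 + v.1 := rfl
    have e2 : (u + v).2 = u.2 + v.2 := rfl
    simp only [symp, e1, e2, add_dotProduct, dotProduct_add]
    ring
  have hsympskew : ∀ u v : V, symp v u = - symp u v := by
    intro u v
    simp only [symp]
    ring
  set B : SympForm V :=
    { β := fun u v => χu (symp u v)
      add_left := by
        intro u v w
        show χu (symp (u + v) w) = χu (symp u w) * χu (symp v w)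
        rw [hsympadd, hχuadd]
      skew := by
        intro u v
        show χu (symp v u) = (χu (symp u v))⁻¹
        rw [hsympskew, hχuneg] } with hB
  have hdiag : ∀ u : V, B.β u u = 1 := by
    intro u
    show χu (symp u u) = 1
    have : symp u u = 0 := sub_self _
    rw [this, hχuzero]
  have hord : ∀ u v : V, B.β u v ^ p ^ b = 1 := by
    intro u v
    show χu (symp u v) ^ p ^ b = 1
    rw [← hχunsmul, nsmul_eq_mul, CharP.cast_eq_zero R (p ^ b), zero_mul, hχuzero]
  obtain ⟨c, d, u1, u2, z, hgen, h2, h3, h4, h5, h6⟩ := B.main p b hp hdiag hord C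
  refine ⟨c, d, u1, u2, z, hgen, ?_, ?_, ?_, ?_, ?_⟩
  · intro j h hh
    exact (hone _).mp (h2 j h hh)
  · intro i habs
    exact h3 i ((hone _).mpr habs)
  · intro i h hh hne
    exact (hone _).mp (h4 i h hh hne)
  · intro i h hh hne
    exact (hone _).mp (h5 i h hh hne)
  · rw [h6]
    unfold relRank
    congr 1
    ext k
    constructor
    · rintro ⟨f, hf, hrest⟩
      refine ⟨f, hf, ?_⟩
      intro v hv
      obtain ⟨g, hg⟩ := hrest v hv
      exact ⟨g, fun u hu => (hone _).mp (hg u hu)⟩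
    · rintro ⟨f, hf, hrest⟩
      refine ⟨f, hf, ?_⟩
      intro v hv
      obtain ⟨g, hg⟩ := hrest v hv
      exact ⟨g, fun u hu => (hone _).mpr (hg u hu)⟩
end

section
/- Let R be a finite commutative local Frobenius ring of characteristic p^b with generating character χ, C ⊆ R^{2n} an additive code, and G a generating set of C as a Z_{p^b}-module consisting only of isotropic generators and hyperbolic pairs, with G_hyp the set of generators forming the hyperbolic pairs. Then for each t = 0, 1, ..., b, |G_hyp ∩ C^{⊥_{χ,t}}| = rank(C / (C ∩ C^{⊥_χ})) − rank(C / (C ∩ C^{⊥_{χ,t}})). -/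
open scoped BigOperators

/- ------------------------------------------------------------------ -/
/- Auxiliary lemmas -/

lemma addchar_sum {R : Type*} [CommRing R] (χ : AddChar R ℂ) {ι : Type*} (s : Finset ι)
    (g : ι → R) : χ (∑ i ∈ s, g i) = ∏ i ∈ s, χ (g i) := by
  classical
  induction s using Finset.induction with
  | empty => simp
  | insert _ _ h ih => rw [Finset.sum_insert h, Finset.prod_insert h, AddChar.map_add_eq_mul, ih]

lemma relRank_mem_aux {V : Type*} [AddCommGroup V] (C D : Set V) {ι : Type*} [Fintype ι]
    (f : ι → V) (hf : ∀ i, f i ∈ C)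
    (h : ∀ x ∈ C, ∃ g : ι → ℤ, x - ∑ i, g i • f i ∈ D) :
    Fintype.card ι ∈ {k : ℕ | ∃ f : Fin k → V, (∀ i, f i ∈ C) ∧
      ∀ x ∈ C, ∃ g : Fin k → ℤ, x - ∑ i, g i • f i ∈ D} := by
  refine ⟨f ∘ (Fintype.equivFin ι).symm, fun i => hf _, fun x hx => ?_⟩
  obtain ⟨g, hg⟩ := h x hx
  refine ⟨g ∘ (Fintype.equivFin ι).symm, ?_⟩
  have : ∑ i, (g ∘ (Fintype.equivFin ι).symm) i • (f ∘ (Fintype.equivFin ι).symm) i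
      = ∑ i, g i • f i :=
    Equiv.sum_comp ((Fintype.equivFin ι).symm) (fun i => g i • f i)
  rwa [this]

/-- pow by mod when `x ^ q = 1`. -/
lemma pow_eq_pow_mod_of_pow_eq_one {x : ℂ} {q : ℕ} (hq : x ^ q = 1) (m : ℕ) :
    x ^ m = x ^ (m % q) := by
  conv_lhs => rw [← Nat.mod_add_div m q]
  rw [pow_add, pow_mul, hq, one_pow, mul_one]

lemma pow_inj_of_orderOf {x : ℂ} {q : ℕ} (hq : 0 < q) (ho : orderOf x = q)
    {s t : ℕ} (hs : s < q) (ht : t < q) (h : x ^ s = x ^ t) : s = t := by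
  have hx1 : x ^ q = 1 := by rw [← ho]; exact pow_orderOf_eq_one x
  have hx0 : x ≠ 0 := by
    intro h0
    rw [h0, zero_pow hq.ne'] at hx1
    exact zero_ne_one hx1
  wlog hst : s ≤ t generalizing s t
  · exact (this ht hs h.symm (le_of_not_ge hst)).symm
  have : x ^ s * x ^ (t - s) = x ^ s * 1 := by
    rw [mul_one, ← pow_add, Nat.add_sub_cancel' hst, h]
  have h2 : x ^ (t - s) = 1 := mul_left_cancel₀ (pow_ne_zero _ hx0) this
  have := orderOf_dvd_of_pow_eq_one h2
  rw [ho] at this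
  have : t - s = 0 := Nat.eq_zero_of_dvd_of_lt this (by omega)
  omega

theorem stmt_10 (p b : ℕ) (hp : p.Prime) (hb : 0 < b)
    (R : Type) [CommRing R] [Fintype R] [IsLocalRing R] [CharP R (p ^ b)]
    (χ : AddChar R ℂ)
    (hχ : ∀ ψ : AddChar R ℂ, ∃ r : R, ∀ t : R, ψ t = χ (r * t))
    (n c d : ℕ)
    (u1 u2 : Fin c → (Fin n → R) × (Fin n → R))
    (z : Fin d → (Fin n → R) × (Fin n → R))
    (C : AddSubgroup ((Fin n → R) × (Fin n → R)))
    (hgen : AddSubgroup.closure (Set.range u1 ∪ Set.range u2 ∪ Set.range z) = C)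
    (hinj : Function.Injective (Sum.elim u1 (Sum.elim u2 z)))
    (hiso : ∀ j, ∀ h ∈ Set.range u1 ∪ Set.range u2 ∪ Set.range z,
      χ (symp (z j) h) = 1)
    (hhyp1 : ∀ i, χ (symp (u1 i) (u2 i)) ≠ 1)
    (hhyp2 : ∀ i, ∀ h ∈ Set.range u1 ∪ Set.range u2 ∪ Set.range z,
      h ≠ u2 i → χ (symp (u1 i) h) = 1)
    (hhyp3 : ∀ i, ∀ h ∈ Set.range u1 ∪ Set.range u2 ∪ Set.range z,
      h ≠ u1 i → χ (symp (u2 i) h) = 1) :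
    ∀ t ≤ b,
      Nat.card ↥((Set.range u1 ∪ Set.range u2) ∩
          chiDualSetT (⇑χ) (C : Set ((Fin n → R) × (Fin n → R))) (p ^ t)) =
        relRank (C : Set ((Fin n → R) × (Fin n → R))) (chiDualSet (⇑χ) (C : Set ((Fin n → R) × (Fin n → R)))) -
          relRank (C : Set ((Fin n → R) × (Fin n → R))) (chiDualSetT (⇑χ) (C : Set ((Fin n → R) × (Fin n → R))) (p ^ t)) := by
  classical
  intro t ht
  set gens : Set ((Fin n → R) × (Fin n → R)) := Set.range u1 ∪ Set.range u2 ∪ Set.range z with hgens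
  -- basic character facts
  have hpb0 : 0 < p ^ b := pow_pos hp.pos b
  have hχb : ∀ s : R, χ s ^ (p ^ b) = 1 := by
    intro s
    rw [← AddChar.map_nsmul_eq_pow, nsmul_eq_mul]
    rw [show ((p ^ b : ℕ) : R) = 0 from CharP.cast_eq_zero R (p ^ b), zero_mul,
      AddChar.map_zero_eq_one]
  -- symp basic facts
  have hflip : ∀ u v : (Fin n → R) × (Fin n → R), symp u v = -symp v u := by
    intro u v; simp only [symp]; ring
  have hsadd : ∀ v x y : (Fin n → R) × (Fin n → R), symp v (x + y) = symp v x + symp v y := by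
    intro v x y
    simp only [symp, Prod.fst_add, Prod.snd_add, dotProduct_add, add_dotProduct]
    ring
  -- symp v · as an AddMonoidHom
  let Sv : ((Fin n → R) × (Fin n → R)) → (((Fin n → R) × (Fin n → R)) →+ R) := fun v => AddMonoidHom.mk' (fun x => symp v x) (hsadd v)
  have hSv : ∀ v x : (Fin n → R) × (Fin n → R), Sv v x = symp v x := fun _ _ => rfl
  -- exponent of V
  have hVexp : ∀ x : (Fin n → R) × (Fin n → R), (p ^ b : ℕ) • x = 0 := by
    intro x
    rw [← Nat.cast_smul_eq_nsmul R, show ((p ^ b : ℕ) : R) = 0 from CharP.cast_eq_zero R (p ^ b),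
      zero_smul]
  have hzs : ∀ (g : ℤ) (x : (Fin n → R) × (Fin n → R)), g • x = ((g % (p ^ b : ℤ)).toNat) • x := by
    intro g x
    have h1 : ((p ^ b : ℤ)) • x = 0 := by
      rw [show ((p ^ b : ℤ)) = ((p ^ b : ℕ) : ℤ) by push_cast; ring, natCast_zsmul, hVexp]
    conv_lhs => rw [← Int.emod_add_mul_ediv g (p ^ b : ℤ)]
    rw [add_zsmul, mul_comm, mul_zsmul, h1, smul_zero, add_zero]
    conv_lhs => rw [← Int.toNat_of_nonneg (Int.emod_nonneg g
      (show (p ^ b : ℤ) ≠ 0 by exact_mod_cast hpb0.ne')), natCast_zsmul]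
  -- generators are in C
  have hu1C : ∀ i, u1 i ∈ C := fun i => by
    rw [← hgen]
    exact AddSubgroup.subset_closure (Or.inl (Or.inl ⟨i, rfl⟩))
  have hu2C : ∀ i, u2 i ∈ C := fun i => by
    rw [← hgen]
    exact AddSubgroup.subset_closure (Or.inl (Or.inr ⟨i, rfl⟩))
  have hzC : ∀ j, z j ∈ C := fun j => by
    rw [← hgen]
    exact AddSubgroup.subset_closure (Or.inr ⟨j, rfl⟩)
  -- the key closure induction lemma
  have key : ∀ (v : (Fin n → R) × (Fin n → R)) (N : ℕ), (∀ h ∈ gens, χ (symp v h) ^ N = 1) →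
      ∀ x ∈ C, χ (symp v x) ^ N = 1 := by
    intro v N hv x hx
    rw [← hgen] at hx
    refine AddSubgroup.closure_induction (p := fun x _ => χ (symp v x) ^ N = 1)
      (fun h hh => hv h hh) ?_ ?_ ?_ hx
    · simp [symp]
    · intro x y _ _ hx hy
      rw [hsadd, AddChar.map_add_eq_mul, mul_pow, hx, hy, mul_one]
    · intro x _ hx
      have : symp v (-x) = -(symp v x) := (Sv v).map_neg x
      rw [this, AddChar.map_neg_eq_inv, inv_pow, hx, inv_one]
  have keyflip : ∀ (v : (Fin n → R) × (Fin n → R)) (N : ℕ), (∀ h ∈ gens, χ (symp v h) ^ N = 1) →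
      ∀ x ∈ C, χ (symp x v) ^ N = 1 := by
    intro v N hv x hx
    rw [hflip x v, AddChar.map_neg_eq_inv, inv_pow, key v N hv x hx, inv_one]
  -- orders
  set ζ : Fin c → ℂ := fun i => χ (symp (u1 i) (u2 i)) with hζ
  set ξ : Fin c → ℂ := fun i => χ (symp (u2 i) (u1 i)) with hξ
  set o : Fin c → ℕ := fun i => orderOf (ζ i) with ho
  have hξζ : ∀ i, ξ i * ζ i = 1 := by
    intro i
    rw [hξ, hζ]
    rw [← AddChar.map_add_eq_mul, hflip (u2 i) (u1 i), neg_add_cancel, AddChar.map_zero_eq_one]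
  have hξpow : ∀ i (m : ℕ), ξ i ^ m = 1 ↔ ζ i ^ m = 1 := by
    intro i m
    have h1 : ξ i ^ m * ζ i ^ m = 1 := by rw [← mul_pow, hξζ, one_pow]
    constructor
    · intro h; rwa [h, one_mul] at h1
    · intro h; rwa [h, mul_one] at h1
  have hodvd : ∀ i, o i ∣ p ^ b := fun i => orderOf_dvd_of_pow_eq_one (hχb _)
  have ho1 : ∀ i, o i ≠ 1 := by
    intro i h
    exact hhyp1 i (orderOf_eq_one_iff.mp h)
  choose a ha hoa using fun i => (Nat.dvd_prime_pow hp).mp (hodvd i)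
  have ha1 : ∀ i, 1 ≤ a i := by
    intro i
    by_contra h
    exact ho1 i (by rw [hoa i, Nat.eq_zero_of_not_pos (by omega : ¬ 0 < a i), pow_zero])
  have hζdvd : ∀ i (m : ℕ), ζ i ^ m = 1 ↔ o i ∣ m := fun i m =>
    (orderOf_dvd_iff_pow_eq_one).symm
  -- membership of generators in the duals
  have hDz : ∀ (τ : ℕ) j, z j ∈ chiDualSetT (⇑χ) (C : Set ((Fin n → R) × (Fin n → R))) (p ^ τ) :=
    fun τ j => keyflip (z j) (p ^ τ) (fun h hh => by rw [hiso j h hh, one_pow])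
  have hDu1 : ∀ (τ : ℕ) i, o i ∣ p ^ τ →
      u1 i ∈ chiDualSetT (⇑χ) (C : Set ((Fin n → R) × (Fin n → R))) (p ^ τ) := by
    intro τ i hdvd
    refine keyflip (u1 i) (p ^ τ) (fun h hh => ?_)
    by_cases he : h = u2 i
    · rw [he]
      exact (hζdvd i _).mpr hdvd
    · rw [hhyp2 i h hh he, one_pow]
  have hDu2 : ∀ (τ : ℕ) i, o i ∣ p ^ τ →
      u2 i ∈ chiDualSetT (⇑χ) (C : Set ((Fin n → R) × (Fin n → R))) (p ^ τ) := by
    intro τ i hdvd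
    refine keyflip (u2 i) (p ^ τ) (fun h hh => ?_)
    by_cases he : h = u1 i
    · rw [he]
      exact (hξpow i _).mpr ((hζdvd i _).mpr hdvd)
    · rw [hhyp3 i h hh he, one_pow]
  -- the D sets are subgroups
  have hDgrp : ∀ (N : ℕ), ∃ Dg : AddSubgroup ((Fin n → R) × (Fin n → R)),
      (Dg : Set ((Fin n → R) × (Fin n → R))) =
        chiDualSetT (⇑χ) (C : Set ((Fin n → R) × (Fin n → R))) N := by
    intro N
    refine ⟨⟨⟨⟨chiDualSetT (⇑χ) (C : Set ((Fin n → R) × (Fin n → R))) N, ?_⟩, ?_⟩, ?_⟩, rfl⟩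
    · -- add_mem
      intro x y hx hy cc hcc
      rw [hsadd, AddChar.map_add_eq_mul, mul_pow, hx cc hcc, hy cc hcc, mul_one]
    · -- zero_mem
      intro cc _
      simp [symp]
    · -- neg_mem
      intro x hx cc hcc
      have : symp cc (-x) = -(symp cc x) := (Sv cc).map_neg x
      rw [this, AddChar.map_neg_eq_inv, inv_pow, hx cc hcc, inv_one]
  -- decomposition of elements of C
  have hrange : Set.range (Sum.elim u1 (Sum.elim u2 z)) = gens := by
    rw [Set.Sum.elim_range, Set.Sum.elim_range, hgens, Set.union_assoc]
  have hdecomp : ∀ x ∈ C, ∃ g : Fin c ⊕ (Fin c ⊕ Fin d) → ℤ,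
      ∑ i, g i • (Sum.elim u1 (Sum.elim u2 z)) i = x := by
    intro x hx
    rw [← hgen] at hx
    have hx' : x ∈ Submodule.span ℤ (Set.range (Sum.elim u1 (Sum.elim u2 z))) := by
      rw [hrange, ← Submodule.span_int_eq_addSubgroupClosure] at *
      exact hx
    exact (Submodule.mem_span_range_iff_exists_fun ℤ).mp hx'
  -- pairwise distinctness of generators
  have hu1inj : Function.Injective u1 := fun x y hxy =>
    Sum.inl.inj (hinj (show Sum.elim u1 (Sum.elim u2 z) (Sum.inl x) =
      Sum.elim u1 (Sum.elim u2 z) (Sum.inl y) from hxy))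
  have hu2inj : Function.Injective u2 := fun x y hxy => by
    have := hinj (show Sum.elim u1 (Sum.elim u2 z) (Sum.inr (Sum.inl x)) =
      Sum.elim u1 (Sum.elim u2 z) (Sum.inr (Sum.inl y)) from hxy)
    simpa using this
  have hne12 : ∀ i j, u1 i ≠ u2 j := fun i j h => by
    have := hinj (show Sum.elim u1 (Sum.elim u2 z) (Sum.inl i) =
      Sum.elim u1 (Sum.elim u2 z) (Sum.inr (Sum.inl j)) from h)
    simp at this
  have hgu1 : ∀ i, u1 i ∈ gens := fun i => Or.inl (Or.inl ⟨i, rfl⟩)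
  have hgu2 : ∀ i, u2 i ∈ gens := fun i => Or.inl (Or.inr ⟨i, rfl⟩)
  -- main claim: value of relRank for each τ
  have main : ∀ τ : ℕ,
      relRank (C : Set ((Fin n → R) × (Fin n → R)))
        (chiDualSetT (⇑χ) (C : Set ((Fin n → R) × (Fin n → R))) (p ^ τ)) =
      2 * (c - (Finset.univ.filter (fun i => o i ∣ p ^ τ)).card) := by
    intro τ
    set A : Finset (Fin c) := Finset.univ.filter (fun i => o i ∣ p ^ τ) with hA
    set B : Finset (Fin c) := Finset.univ.filter (fun i => ¬ o i ∣ p ^ τ) with hB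
    have hABcard : A.card + B.card = c := by
      rw [hA, hB, Finset.card_filter_add_card_filter_not]
      simp
    have hBcard : B.card = c - A.card := by omega
    have hAc : A.card ≤ c := by omega
    obtain ⟨Dg, hDg⟩ := hDgrp (p ^ τ)
    -- upper bound witness
    have hcard : Fintype.card (↥B ⊕ ↥B) = 2 * (c - A.card) := by
      rw [Fintype.card_sum, Fintype.card_coe, hBcard]; ring
    have hmem : (2 * (c - A.card)) ∈ {k : ℕ | ∃ f : Fin k → ((Fin n → R) × (Fin n → R)),
        (∀ i, f i ∈ (C : Set ((Fin n → R) × (Fin n → R)))) ∧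
        ∀ x ∈ (C : Set ((Fin n → R) × (Fin n → R))), ∃ g : Fin k → ℤ,
          x - ∑ i, g i • f i ∈ chiDualSetT (⇑χ) (C : Set ((Fin n → R) × (Fin n → R))) (p ^ τ)} := by
      rw [← hcard]
      refine relRank_mem_aux _ _ (Sum.elim (fun i : ↥B => u1 i) (fun i : ↥B => u2 i))
        (fun i' => by cases i' with
          | inl i => exact hu1C i
          | inr i => exact hu2C i) ?_
      intro x hx
      obtain ⟨g, hg⟩ := hdecomp x hx
      refine ⟨Sum.elim (fun i : ↥B => g (Sum.inl ↑i)) (fun i : ↥B => g (Sum.inr (Sum.inl ↑i))), ?_⟩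
      have hxeq : x - ∑ i', (Sum.elim (fun i : ↥B => g (Sum.inl ↑i))
            (fun i : ↥B => g (Sum.inr (Sum.inl ↑i)))) i' •
            (Sum.elim (fun i : ↥B => u1 i) (fun i : ↥B => u2 i)) i' =
          (∑ i ∈ A, g (Sum.inl i) • u1 i) + (∑ i ∈ A, g (Sum.inr (Sum.inl i)) • u2 i) +
            ∑ j, g (Sum.inr (Sum.inr j)) • z j := by
        rw [← hg, Fintype.sum_sum_type, Fintype.sum_sum_type, Fintype.sum_sum_type]
        simp only [Sum.elim_inl, Sum.elim_inr]
        rw [← Finset.sum_filter_add_sum_filter_not Finset.univ (fun i => o i ∣ p ^ τ)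
          (fun i => g (Sum.inl i) • u1 i)]
        rw [← Finset.sum_filter_add_sum_filter_not Finset.univ (fun i => o i ∣ p ^ τ)
          (fun i => g (Sum.inr (Sum.inl i)) • u2 i)]
        rw [Finset.sum_coe_sort B (fun i => g (Sum.inl i) • u1 i),
          Finset.sum_coe_sort B (fun i => g (Sum.inr (Sum.inl i)) • u2 i)]
        abel
      rw [hxeq, ← hDg]
      have h1 : ∑ i ∈ A, g (Sum.inl i) • u1 i ∈ Dg :=
        AddSubgroup.sum_mem _ (fun i hi => Dg.zsmul_mem
          (show u1 i ∈ (Dg : Set ((Fin n → R) × (Fin n → R))) from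
            hDg ▸ hDu1 τ i (Finset.mem_filter.mp hi).2) _)
      have h2 : ∑ i ∈ A, g (Sum.inr (Sum.inl i)) • u2 i ∈ Dg :=
        AddSubgroup.sum_mem _ (fun i hi => Dg.zsmul_mem
          (show u2 i ∈ (Dg : Set ((Fin n → R) × (Fin n → R))) from
            hDg ▸ hDu2 τ i (Finset.mem_filter.mp hi).2) _)
      have h3 : ∑ j, g (Sum.inr (Sum.inr j)) • z j ∈ Dg :=
        AddSubgroup.sum_mem _ (fun j _ => Dg.zsmul_mem
          (show z j ∈ (Dg : Set ((Fin n → R) × (Fin n → R))) from hDg ▸ hDz τ j) _)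
      exact Dg.add_mem (Dg.add_mem h1 h2) h3
    refine le_antisymm (Nat.sInf_le hmem) (le_csInf ⟨_, hmem⟩ ?_)
    rintro k ⟨f, hfC, hfg⟩
    -- detectors, targets, character map
    set w : ↥B ⊕ ↥B → ((Fin n → R) × (Fin n → R)) :=
      Sum.elim (fun i : ↥B => u2 i) (fun i : ↥B => u1 i) with hw
    set bs : ↥B ⊕ ↥B → ((Fin n → R) × (Fin n → R)) :=
      Sum.elim (fun i : ↥B => u1 i) (fun i : ↥B => u2 i) with hbs
    set ai : ↥B ⊕ ↥B → Fin c := Sum.elim (fun i => ↑i) (fun i => ↑i) with hai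
    set Θ : ((Fin n → R) × (Fin n → R)) → (↥B ⊕ ↥B → ℂ) :=
      fun x i' => χ (symp (w i') x) ^ (p ^ (a (ai i') - 1)) with hΘ
    have hwC : ∀ i', w i' ∈ C := fun i' => by
      cases i' with
      | inl i => exact hu2C i
      | inr i => exact hu1C i
    have hbsC : ∀ i', bs i' ∈ C := fun i' => by
      cases i' with
      | inl i => exact hu1C i
      | inr i => exact hu2C i
    have hτa : ∀ i', τ + 1 ≤ a (ai i') := by
      intro i'
      have hiB : (ai i') ∈ B := by
        cases i' with
        | inl i => exact i.2
        | inr i => exact i.2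
      have hnd : ¬ o (ai i') ∣ p ^ τ := (Finset.mem_filter.mp hiB).2
      by_contra h
      exact hnd (by rw [hoa]; exact pow_dvd_pow p (by omega))
    -- order of diagonal entries
    have hδpow : ∀ i' (m : ℕ), Θ (bs i') i' ^ m = 1 ↔ o (ai i') ∣ p ^ (a (ai i') - 1) * m := by
      intro i' m
      cases i' with
      | inl i =>
        show (χ (symp (u2 ↑i) (u1 ↑i)) ^ _) ^ m = 1 ↔ _
        rw [← pow_mul]
        exact (hξpow ↑i _).trans (hζdvd ↑i _)
      | inr i =>
        show (χ (symp (u1 ↑i) (u2 ↑i)) ^ _) ^ m = 1 ↔ _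
        rw [← pow_mul]
        exact hζdvd ↑i _
    have horderδ : ∀ i', orderOf (Θ (bs i') i') = p := by
      intro i'
      have hpow : Θ (bs i') i' ^ p = 1 := by
        rw [hδpow]
        rw [hoa (ai i')]
        rw [← pow_succ]
        rw [show a (ai i') - 1 + 1 = a (ai i') by have := ha1 (ai i'); omega]
      have hne : Θ (bs i') i' ≠ 1 := by
        intro h1
        have := (hδpow i' 1).mp (by rw [pow_one]; exact h1)
        rw [mul_one, hoa (ai i')] at this
        have := (Nat.pow_dvd_pow_iff_le_right hp.one_lt).mp this
        have := ha1 (ai i')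
        omega
      have hd : orderOf (Θ (bs i') i') ∣ p := orderOf_dvd_of_pow_eq_one hpow
      rcases (Nat.Prime.eq_one_or_self_of_dvd hp _ hd) with h | h
      · exact absurd (orderOf_eq_one_iff.mp h) hne
      · exact h
    -- Θ kills the dual
    have hθD : ∀ x ∈ chiDualSetT (⇑χ) (C : Set ((Fin n → R) × (Fin n → R))) (p ^ τ),
        ∀ i', Θ x i' = 1 := by
      intro x hx i'
      have h1 : χ (symp (w i') x) ^ (p ^ τ) = 1 := hx (w i') (hwC i')
      have h2 : p ^ (a (ai i') - 1) = p ^ τ * p ^ (a (ai i') - 1 - τ) := by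
        rw [← pow_add]
        congr 1
        have := hτa i'
        omega
      show χ (symp (w i') x) ^ (p ^ (a (ai i') - 1)) = 1
      rw [h2, pow_mul, h1, one_pow]
    -- Θ values on C are p-th roots of unity
    have hθp : ∀ x ∈ C, ∀ i', Θ x i' ^ p = 1 := by
      intro x hx i'
      have hgen' : ∀ h ∈ gens, χ (symp (w i') h) ^ (p ^ (a (ai i'))) = 1 := by
        intro h hh
        cases i' with
        | inl i =>
          by_cases he : h = u1 ↑i
          · rw [he]
            show ξ ↑i ^ _ = 1
            rw [hξpow, hζdvd, hoa]
            simp [hai]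
          · rw [show w (Sum.inl i) = u2 ↑i from rfl, hhyp3 ↑i h hh he, one_pow]
        | inr i =>
          by_cases he : h = u2 ↑i
          · rw [he]
            show ζ ↑i ^ _ = 1
            rw [hζdvd, hoa]
            simp [hai]
          · rw [show w (Sum.inr i) = u1 ↑i from rfl, hhyp2 ↑i h hh he, one_pow]
      have h1 : χ (symp (w i') x) ^ (p ^ (a (ai i'))) = 1 := key (w i') _ hgen' x hx
      show (χ (symp (w i') x) ^ (p ^ (a (ai i') - 1))) ^ p = 1
      rw [← pow_mul, ← pow_succ, show a (ai i') - 1 + 1 = a (ai i') by have := ha1 (ai i'); omega]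
      exact h1
    -- Θ is additive / multiplicative
    have hθadd : ∀ x y i', Θ (x + y) i' = Θ x i' * Θ y i' := by
      intro x y i'
      show χ (symp (w i') (x + y)) ^ _ = _
      rw [hsadd, AddChar.map_add_eq_mul, mul_pow]
    have hθsum : ∀ {ι : Type} (s : Finset ι) (v : ι → ((Fin n → R) × (Fin n → R))) i',
        Θ (∑ j ∈ s, v j) i' = ∏ j ∈ s, Θ (v j) i' := by
      intro ι s v i'
      have h1 : symp (w i') (∑ j ∈ s, v j) = ∑ j ∈ s, symp (w i') (v j) :=
        map_sum (Sv (w i')) v s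
      show χ (symp (w i') (∑ j ∈ s, v j)) ^ _ = _
      rw [h1, addchar_sum, ← Finset.prod_pow]
    have hθnsmul : ∀ (m : ℕ) x i', Θ (m • x) i' = Θ x i' ^ m := by
      intro m x i'
      have h1 : symp (w i') (m • x) = m • symp (w i') x := AddMonoidHom.map_nsmul (Sv (w i')) m x
      show χ (symp (w i') (m • x)) ^ _ = (χ (symp (w i') x) ^ _) ^ m
      rw [h1, AddChar.map_nsmul_eq_pow, ← pow_mul, ← pow_mul, mul_comm]
    -- off-diagonal vanishing
    have hθoff : ∀ i' j', j' ≠ i' → Θ (bs j') i' = 1 := by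
      intro i' j' hne
      cases i' with
      | inl i =>
        cases j' with
        | inl j =>
          have hji : (↑j : Fin c) ≠ ↑i := fun h =>
            hne (by cases i; cases j; simp only at h; congr 1; exact Subtype.ext h)
          show χ (symp (u2 ↑i) (u1 ↑j)) ^ _ = 1
          rw [hhyp3 ↑i (u1 ↑j) (hgu1 ↑j) (fun h => hji (hu1inj h)), one_pow]
        | inr j =>
          show χ (symp (u2 ↑i) (u2 ↑j)) ^ _ = 1
          rw [hhyp3 ↑i (u2 ↑j) (hgu2 ↑j) (Ne.symm (hne12 ↑i ↑j)), one_pow]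
      | inr i =>
        cases j' with
        | inl j =>
          show χ (symp (u1 ↑i) (u1 ↑j)) ^ _ = 1
          rw [hhyp2 ↑i (u1 ↑j) (hgu1 ↑j) (hne12 ↑j ↑i), one_pow]
        | inr j =>
          have hji : (↑j : Fin c) ≠ ↑i := fun h =>
            hne (by cases i; cases j; simp only at h; congr 1; exact Subtype.ext h)
          show χ (symp (u1 ↑i) (u2 ↑j)) ^ _ = 1
          rw [hhyp2 ↑i (u2 ↑j) (hgu2 ↑j) (fun h => hji (hu2inj h)), one_pow]
    -- the two maps into function space
    set Φ : (Fin k → Fin p) → (↥B ⊕ ↥B → ℂ) :=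
      fun e i' => ∏ i, Θ (f i) i' ^ (e i : ℕ) with hΦ
    set Ψ : ((↥B ⊕ ↥B) → Fin p) → (↥B ⊕ ↥B → ℂ) :=
      fun e i' => Θ (bs i') i' ^ (e i' : ℕ) with hΨdef
    have hΘΦ : ∀ x ∈ C, Θ x ∈ Set.range Φ := by
      intro x hx
      obtain ⟨g, hgD⟩ := hfg x hx
      have hyC : (∑ i, g i • f i) ∈ C := AddSubgroup.sum_mem _ (fun i _ => C.zsmul_mem (hfC i) _)
      have hxy : Θ x = Θ (∑ i, g i • f i) := by
        funext i'
        have h1 : Θ x i' = Θ (x - ∑ i, g i • f i) i' * Θ (∑ i, g i • f i) i' := by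
          rw [← hθadd, sub_add_cancel]
        rw [h1, hθD _ hgD i', one_mul]
      refine ⟨fun i => ⟨((g i % (p ^ b : ℤ)).toNat) % p, Nat.mod_lt _ hp.pos⟩, ?_⟩
      funext i'
      rw [hxy]
      show ∏ i, Θ (f i) i' ^ _ = Θ (∑ i, g i • f i) i'
      rw [hθsum Finset.univ (fun i => g i • f i) i']
      refine Finset.prod_congr rfl (fun i _ => ?_)
      rw [hzs (g i), hθnsmul]
      exact (pow_eq_pow_mod_of_pow_eq_one (hθp (f i) (hfC i) i') _).symm
    have hΨΦ : Set.range Ψ ⊆ Set.range Φ := by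
      rintro _ ⟨e, rfl⟩
      have hxC : (∑ j', (e j' : ℕ) • bs j') ∈ C :=
        AddSubgroup.sum_mem _ (fun j' _ => AddSubgroup.nsmul_mem _ (hbsC j') _)
      have hΘx : Θ (∑ j', (e j' : ℕ) • bs j') = Ψ e := by
        funext i'
        rw [hθsum Finset.univ (fun j' => (e j' : ℕ) • bs j') i']
        rw [Finset.prod_eq_single_of_mem i' (Finset.mem_univ i')
          (fun j' _ hj' => by rw [hθnsmul, hθoff i' j' hj', one_pow])]
        rw [hθnsmul]
      rw [← hΘx]
      exact hΘΦ _ hxC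
    have hΨinj : Function.Injective Ψ := by
      intro e1 e2 h
      funext i'
      exact Fin.ext (pow_inj_of_orderOf hp.pos (horderδ i') (e1 i').2 (e2 i').2
        (congr_fun h i'))
    -- counting
    have hc1 : (p : ℕ) ^ (2 * (c - A.card)) = Nat.card (Set.range Ψ) := by
      rw [Nat.card_range_of_injective hΨinj, Nat.card_eq_fintype_card, Fintype.card_fun,
        Fintype.card_fin, hcard]
    have hc2 : Nat.card (Set.range Φ) ≤ p ^ k := by
      have h5 : Nat.card (Set.range Φ) ≤ Nat.card (Fin k → Fin p) := Finite.card_range_le Φ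
      have h4 : Nat.card (Fin k → Fin p) = p ^ k := by
        rw [Nat.card_eq_fintype_card, Fintype.card_fun, Fintype.card_fin, Fintype.card_fin]
      omega
    have hc3 : Nat.card (Set.range Ψ) ≤ Nat.card (Set.range Φ) := by
      rw [Nat.card_coe_set_eq, Nat.card_coe_set_eq]
      exact Set.ncard_le_ncard hΨΦ (Set.finite_range Φ)
    have : (p : ℕ) ^ (2 * (c - A.card)) ≤ p ^ k := by omega
    exact (Nat.pow_le_pow_iff_right hp.one_lt).mp this
  -- the τ = 0 filter is empty
  have hA0 : (Finset.univ.filter (fun i => o i ∣ p ^ 0)).card = 0 := by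
    rw [Finset.card_eq_zero, Finset.filter_eq_empty_iff]
    intro i _
    rw [pow_zero, Nat.dvd_one]
    exact ho1 i
  have hD0 : chiDualSet (⇑χ) (C : Set ((Fin n → R) × (Fin n → R))) =
      chiDualSetT (⇑χ) (C : Set ((Fin n → R) × (Fin n → R))) (p ^ 0) := by
    ext v
    simp [chiDualSet, chiDualSetT]
  set At := Finset.univ.filter (fun i => o i ∣ p ^ t) with hAt
  have hAtc : At.card ≤ c := le_trans (Finset.card_filter_le _ _) (by simp)
  -- identification of the left-hand set
  have hLset : (Set.range u1 ∪ Set.range u2) ∩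
      chiDualSetT (⇑χ) (C : Set ((Fin n → R) × (Fin n → R))) (p ^ t) =
      u1 '' ↑At ∪ u2 '' ↑At := by
    ext x
    constructor
    · rintro ⟨hx1 | hx2, hxD⟩
      · obtain ⟨i, rfl⟩ := hx1
        left
        refine ⟨i, ?_, rfl⟩
        have h1 := hxD (u2 i) (hu2C i)
        refine Finset.mem_coe.mpr (Finset.mem_filter.mpr ⟨Finset.mem_univ i, ?_⟩)
        exact (hζdvd i _).mp ((hξpow i _).mp h1)
      · obtain ⟨i, rfl⟩ := hx2
        right
        refine ⟨i, ?_, rfl⟩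
        have h1 := hxD (u1 i) (hu1C i)
        refine Finset.mem_coe.mpr (Finset.mem_filter.mpr ⟨Finset.mem_univ i, ?_⟩)
        exact (hζdvd i _).mp h1
    · rintro (⟨i, hi, rfl⟩ | ⟨i, hi, rfl⟩)
      · exact ⟨Or.inl ⟨i, rfl⟩,
          hDu1 t i (Finset.mem_filter.mp (Finset.mem_coe.mp hi)).2⟩
      · exact ⟨Or.inr ⟨i, rfl⟩,
          hDu2 t i (Finset.mem_filter.mp (Finset.mem_coe.mp hi)).2⟩
  have hLcard : Nat.card ↥((Set.range u1 ∪ Set.range u2) ∩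
      chiDualSetT (⇑χ) (C : Set ((Fin n → R) × (Fin n → R))) (p ^ t)) = 2 * At.card := by
    rw [Nat.card_coe_set_eq, hLset]
    rw [Set.ncard_union_eq (Set.disjoint_left.mpr ?_) (Set.toFinite _) (Set.toFinite _),
      Set.ncard_image_of_injective _ hu1inj, Set.ncard_image_of_injective _ hu2inj,
      Set.ncard_coe_finset]
    · ring
    · rintro x ⟨i, _, rfl⟩ ⟨j, _, hj⟩
      exact hne12 i j hj.symm
  rw [hLcard, hD0, main 0, main t, hA0, ← hAt]
  omega
end
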